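/- arXiv:1612.06609 — 6 statements merged into one kernel-verified Lean document; each statement's English description precedes it below -/
import Mathlib

section
/- Let p be a prime, n a positive integer, and k a primitive divisor of p^n − 1 such that k is even if p is odd. Suppose k = b·c with b > 1, b dividing n, and c a primitive divisor of p^{n/b} − 1. Then c is even if p is odd (so GPaley(p^{n/b}, c) is defined), the graph GPaley(p^{n/b}, c) is connected, and GPaley(p^n, k) is isomorphic to the b-fold Cartesian power □^b GPaley(p^{n/b}, c). -/
open Polynomial IntermediateField

section Helpers
variable {L : Type*} [Field L] [Fintype L]

omit [Fintype L] in
lemma roots_helper {f : L[X]} (hf : f ≠ 0) {S : Finset L} (hS : ∀ x ∈ S, f.IsRoot x)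
    (hcard : f.natDegree ≤ S.card) {x : L} (hx : f.IsRoot x) : x ∈ S := by
  classical
  have hsub : S ⊆ f.roots.toFinset := fun y hy =>
    Multiset.mem_toFinset.2 ((mem_roots hf).2 (hS y hy))
  have hle : f.roots.toFinset.card ≤ S.card :=
    le_trans (le_trans (Multiset.toFinset_card_le _) (f.card_roots')) hcard
  have heq : S = f.roots.toFinset := Finset.eq_of_subset_of_card_le hsub hle
  rw [heq]
  exact Multiset.mem_toFinset.2 ((mem_roots hf).2 hx)

lemma exists_nonzero_orderOf {k : ℕ} (hk : k ∣ Fintype.card L - 1) :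
    ∃ x : L, x ≠ 0 ∧ orderOf x = k := by
  classical
  obtain ⟨g, hg⟩ := IsCyclic.exists_ofOrder_eq_natCard (α := Lˣ)
  have hN : orderOf g = Fintype.card L - 1 := by
    rw [hg, Nat.card_eq_fintype_card, Fintype.card_units]
  set N := Fintype.card L - 1 with hNdef
  have hN0 : 0 < N := by
    have := Fintype.one_lt_card (α := L)
    omega
  refine ⟨(g ^ (N / k) : Lˣ), Units.ne_zero _, ?_⟩
  rw [orderOf_units, orderOf_pow, hN]
  have hdvd : N / k ∣ N := Nat.div_dvd_of_dvd hk
  rw [Nat.gcd_eq_right hdvd, Nat.div_div_self hk hN0.ne']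

lemma pow_eq_one_iff_exists {k : ℕ} (hk0 : 0 < k) (hk : k ∣ Fintype.card L - 1) {u : L}
    (hu : u ≠ 0) : u ^ k = 1 ↔ ∃ z : L, z ≠ 0 ∧ z ^ ((Fintype.card L - 1) / k) = u := by
  classical
  set N := Fintype.card L - 1 with hNdef
  have hdk : N / k * k = N := Nat.div_mul_cancel hk
  constructor
  · intro h
    obtain ⟨g, hg⟩ := IsCyclic.exists_ofOrder_eq_natCard (α := Lˣ)
    have hNg : orderOf g = N := by rw [hg, Nat.card_eq_fintype_card, Fintype.card_units]
    have hgen : ∀ y : Lˣ, y ∈ Submonoid.powers g := by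
      intro y
      rw [mem_powers_iff_mem_zpowers]
      have htop : Subgroup.zpowers g = ⊤ := by
        apply Subgroup.eq_top_of_card_eq
        rw [Nat.card_zpowers, hNg, Nat.card_eq_fintype_card, Fintype.card_units]
      rw [htop]; trivial
    obtain ⟨t, ht⟩ := hgen (Units.mk0 u hu)
    have ht' : g ^ t = Units.mk0 u hu := ht
    have h1 : g ^ (t * k) = 1 := by
      rw [pow_mul, ht']
      ext
      simpa using h
    have h2 : N ∣ t * k := by rw [← hNg]; exact orderOf_dvd_of_pow_eq_one h1
    have h3 : N / k ∣ t := by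
      have h4 : N / k * k ∣ t * k := by rw [hdk]; exact h2
      exact (Nat.mul_dvd_mul_iff_right hk0).1 h4
    obtain ⟨r, hr⟩ := h3
    refine ⟨(g ^ r : Lˣ), Units.ne_zero _, ?_⟩
    have h5 : ((g ^ r) ^ (N / k) : Lˣ) = Units.mk0 u hu := by
      rw [← pow_mul, mul_comm, ← hr, ht']
    have h6 : (((g ^ r) ^ (N / k) : Lˣ) : L) = u := by rw [h5]; rfl
    rw [← h6]; push_cast; ring
  · rintro ⟨z, hz, rfl⟩
    rw [← pow_mul, hdk]
    exact FiniteField.pow_card_sub_one_eq_one z hz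

lemma mem_powers_of_pow_eq_one {s : L} {k : ℕ} (hs : orderOf s = k) (hk0 : 0 < k) {u : L}
    (hu : u ^ k = 1) : ∃ j, j < k ∧ s ^ j = u := by
  classical
  have hf : (X ^ k - 1 : L[X]) ≠ 0 := by
    simpa using X_pow_sub_C_ne_zero hk0 (1 : L)
  have hdeg : (X ^ k - 1 : L[X]).natDegree = k := by
    simpa using natDegree_X_pow_sub_C (n := k) (r := (1 : L))
  set S : Finset L := (Finset.range k).image (s ^ ·) with hSdef
  have hinj : Set.InjOn (s ^ ·) ↑(Finset.range k) := by
    rw [Finset.coe_range]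
    exact (pow_injOn_Iio_orderOf (x := s)).mono (by rw [hs])
  have hcardS : S.card = k := by
    rw [hSdef, Finset.card_image_of_injOn hinj, Finset.card_range]
  have hroot : ∀ x ∈ S, (X ^ k - 1 : L[X]).IsRoot x := by
    intro x hx
    obtain ⟨j, _, rfl⟩ := Finset.mem_image.1 hx
    simp only [IsRoot, eval_sub, eval_pow, eval_X, eval_one, sub_eq_zero]
    rw [← hs, ← pow_mul, mul_comm, pow_mul, pow_orderOf_eq_one, one_pow]
  have hu' : (X ^ k - 1 : L[X]).IsRoot u := by simp [IsRoot, hu]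
  have hmem := roots_helper hf hroot (le_of_eq (hdeg.trans hcardS.symm)) hu'
  obtain ⟨j, hj, hju⟩ := Finset.mem_image.1 hmem
  exact ⟨j, Finset.mem_range.1 hj, hju⟩

lemma orderOf_dvd_card_pow_minpoly {F L : Type*} [Field F] [Fintype F] [Field L] [Finite L]
    [Algebra F L] {x : L} (hx : x ≠ 0) :
    orderOf x ∣ Fintype.card F ^ (minpoly F x).natDegree - 1 := by
  classical
  haveI : Module.Finite F L := Module.Finite.of_finite
  have hint : IsIntegral F x := IsIntegral.of_finite F x
  set K := F⟮x⟯ with hK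
  letI : Fintype K := Fintype.ofFinite K
  have hrank : Module.finrank F K = (minpoly F x).natDegree :=
    IntermediateField.adjoin.finrank hint
  have hcard : Fintype.card K = Fintype.card F ^ (minpoly F x).natDegree := by
    rw [Module.card_eq_pow_finrank (K := F) (V := K), hrank]
  set x' : K := IntermediateField.AdjoinSimple.gen F x with hx'
  have hgen : algebraMap K L x' = x := IntermediateField.AdjoinSimple.algebraMap_gen F x
  have hx'0 : x' ≠ 0 := by
    intro h
    rw [h, map_zero] at hgen
    exact hx hgen.symm
  have h1 : x' ^ (Fintype.card K - 1) = 1 := FiniteField.pow_card_sub_one_eq_one x' hx'0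
  have horder : orderOf x = orderOf x' := by
    rw [← hgen]
    exact orderOf_injective (algebraMap K L).toMonoidHom (algebraMap K L).injective x'
  rw [horder, ← hcard]
  exact orderOf_dvd_of_pow_eq_one h1

lemma pow_sub_X_dvd {p m n : ℕ} (hm : m ≠ 0) (hn : n ≠ 0) (hmn : m ∣ n) :
    (X ^ p ^ m - X : (ZMod p)[X]) ∣ (X ^ p ^ n - X) := by
  rcases Nat.eq_zero_or_pos p with rfl | hp0
  · simp [zero_pow hm, zero_pow hn]
  have h1 : p ^ m - 1 ∣ p ^ n - 1 := by
    obtain ⟨t, rfl⟩ := hmn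
    calc p ^ m - 1 ∣ (p ^ m) ^ t - 1 ^ t := Nat.sub_dvd_pow_sub_pow _ 1 t
      _ = p ^ (m * t) - 1 := by rw [← pow_mul, one_pow]
  have key : ∀ a : ℕ, a ≠ 0 → (X ^ p ^ a - X : (ZMod p)[X]) = X * (X ^ (p ^ a - 1) - 1) := by
    intro a _
    have h2 : 0 < p ^ a := Nat.pow_pos hp0
    rw [mul_sub, mul_one, ← pow_succ', Nat.sub_add_cancel h2]
  rw [key m hm, key n hn]
  refine mul_dvd_mul_left X ?_
  obtain ⟨t, ht⟩ := h1
  calc (X ^ (p ^ m - 1) - 1 : (ZMod p)[X]) ∣ (X ^ (p ^ m - 1)) ^ t - 1 ^ t :=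
        sub_dvd_pow_sub_pow _ 1 t
    _ = X ^ (p ^ n - 1) - 1 := by rw [← pow_mul, one_pow, ← ht]

noncomputable def fieldEmb (p : ℕ) [Fact p.Prime] (m n : ℕ) (hm : m ≠ 0) (hn : n ≠ 0)
    (hmn : m ∣ n) : GaloisField p m →ₐ[ZMod p] GaloisField p n := by
  have hp : 1 < p := (Fact.out : p.Prime).one_lt
  haveI := FiniteField.isSplittingField_of_nat_card_eq (p := p) (n := n) (GaloisField.card p n hn)
  haveI := FiniteField.isSplittingField_of_nat_card_eq (p := p) (n := m) (GaloisField.card p m hm)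
  have hsplits : Splits ((X ^ p ^ m - X : (ZMod p)[X]).map (algebraMap (ZMod p) (GaloisField p n))) := by
    have hbig : Splits ((X ^ p ^ n - X : (ZMod p)[X]).map (algebraMap (ZMod p) (GaloisField p n))) :=
      IsSplittingField.splits _ _
    exact Splits.of_dvd hbig
      (map_ne_zero (FiniteField.X_pow_card_pow_sub_X_ne_zero _ hn hp)) (Polynomial.map_dvd _ (pow_sub_X_dvd hm hn hmn))
  exact IsSplittingField.lift (GaloisField p m) (X ^ p ^ m - X) hsplits

lemma mem_range_of_pow_card {F L : Type*} [Field F] [Fintype F] [Field L] [Fintype L]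
    (e : F →+* L) {x : L} (hx : x ^ (Fintype.card F) = x) : ∃ a : F, e a = x := by
  classical
  have hp : 1 < Fintype.card F := Fintype.one_lt_card
  have hf : (X ^ (Fintype.card F) - X : L[X]) ≠ 0 :=
    FiniteField.X_pow_card_sub_X_ne_zero _ hp
  have hdeg : (X ^ (Fintype.card F) - X : L[X]).natDegree = Fintype.card F :=
    FiniteField.X_pow_card_sub_X_natDegree_eq _ hp
  set S : Finset L := Finset.univ.image e with hS
  have hcard : S.card = Fintype.card F := by
    rw [hS, Finset.card_image_of_injective _ e.injective, Finset.card_univ]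
  have hroot : ∀ y ∈ S, (X ^ (Fintype.card F) - X : L[X]).IsRoot y := by
    intro y hy
    obtain ⟨a, _, rfl⟩ := Finset.mem_image.1 hy
    simp only [IsRoot, eval_sub, eval_pow, eval_X, sub_eq_zero, ← map_pow,
      FiniteField.pow_card]
  have hx' : (X ^ (Fintype.card F) - X : L[X]).IsRoot x := by
    simp only [IsRoot, eval_sub, eval_pow, eval_X, sub_eq_zero, hx]
  have hmem := roots_helper hf hroot (le_of_eq (hdeg.trans hcard.symm)) hx'
  obtain ⟨a, _, ha⟩ := Finset.mem_image.1 hmem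
  exact ⟨a, ha⟩

end Helpers

/-- `k` is a primitive divisor of `p ^ n - 1`:  `k` divides `p ^ n - 1`
but `k` does not divide `p ^ a - 1` for any `1 ≤ a < n`. -/
def IsPrimitiveDivisor (p n k : ℕ) : Prop :=
  k ∣ p ^ n - 1 ∧ ∀ a : ℕ, 1 ≤ a → a < n → ¬ k ∣ p ^ a - 1

/-- The generalised Paley graph `GPaley(p^n, k)`: vertices are the elements of
`GF(p^n)`, and distinct `x, y` are adjacent iff `x - y` is a `d`-th power in
`GF(p^n)^*`, where `d = (p^n - 1)/k`.  (Under the standing hypothesis that `k`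
is even when `p` is odd, the underlying relation is symmetric, so taking the
symmetrised relation via `fromRel` yields exactly this graph.) -/
def gpaley (p : ℕ) [Fact p.Prime] (n k : ℕ) : SimpleGraph (GaloisField p n) :=
  SimpleGraph.fromRel fun x y =>
    ∃ z : GaloisField p n, z ≠ 0 ∧ z ^ ((p ^ n - 1) / k) = x - y

/-- The `b`-fold Cartesian (box) power of a simple graph: vertices are
`b`-tuples, two tuples being adjacent iff they agree in all but one
coordinate and are adjacent in that coordinate. -/
def boxPow {V : Type*} (b : ℕ) (G : SimpleGraph V) : SimpleGraph (Fin b → V) where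
  Adj x y := ∃ i, G.Adj (x i) (y i) ∧ ∀ j, j ≠ i → x j = y j
  symm := by
    constructor
    rintro x y ⟨i, hadj, h⟩
    exact ⟨i, hadj.symm, fun j hj => (h j hj).symm⟩
  loopless := by
    constructor
    rintro x ⟨i, hadj, -⟩
    exact G.loopless.irrefl _ hadj

lemma gpaley_adj_iff (p : ℕ) [Fact p.Prime] {n k : ℕ} (hn : n ≠ 0) (hk0 : 0 < k)
    (hk : k ∣ p ^ n - 1) (hsym : (-1 : GaloisField p n) ^ k = 1) (x y : GaloisField p n) :
    (gpaley p n k).Adj x y ↔ x ≠ y ∧ (x - y) ^ k = 1 := by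
  classical
  letI : Fintype (GaloisField p n) := Fintype.ofFinite _
  have hcard : Fintype.card (GaloisField p n) = p ^ n := by
    rw [← Nat.card_eq_fintype_card, GaloisField.card p n hn]
  have hk' : k ∣ Fintype.card (GaloisField p n) - 1 := by rw [hcard]; exact hk
  rw [gpaley, SimpleGraph.fromRel_adj]
  refine and_congr_right fun hxy => ?_
  have hxy' : x - y ≠ 0 := sub_ne_zero.2 hxy
  have hyx' : y - x ≠ 0 := sub_ne_zero.2 (Ne.symm hxy)
  have h1 : (∃ z : GaloisField p n, z ≠ 0 ∧ z ^ ((p ^ n - 1) / k) = x - y) ↔ (x - y) ^ k = 1 := by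
    rw [← hcard]
    exact (pow_eq_one_iff_exists hk0 hk' hxy').symm
  have h2 : (∃ z : GaloisField p n, z ≠ 0 ∧ z ^ ((p ^ n - 1) / k) = y - x) ↔ (y - x) ^ k = 1 := by
    rw [← hcard]
    exact (pow_eq_one_iff_exists hk0 hk' hyx').symm
  have h3 : (y - x) ^ k = (x - y) ^ k := by
    have : y - x = -1 * (x - y) := by ring
    rw [this, mul_pow, hsym, one_mul]
  rw [h1, h2, h3, or_self]

/-- If `k` is a primitive divisor of `p^n - 1` (even if `p` is odd)
and `k = b * c` with `b > 1`, `b ∣ n`, `c` a primitive divisor of `p^(n/b) - 1`,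
then `c` is even if `p` is odd, `GPaley(p^(n/b), c)` is connected, and
`GPaley(p^n, k)` is isomorphic to the `b`-fold Cartesian power of
`GPaley(p^(n/b), c)`. -/
theorem gpaley_iso_boxPow (p n k b c : ℕ) [Fact p.Prime] (hn : 0 < n)
    (hk : IsPrimitiveDivisor p n k) (heven : Odd p → Even k)
    (hkbc : k = b * c) (hb : 1 < b) (hbn : b ∣ n)
    (hc : IsPrimitiveDivisor p (n / b) c) :
    (Odd p → Even c) ∧ (gpaley p (n / b) c).Connected ∧
      Nonempty (gpaley p n k ≃g boxPow b (gpaley p (n / b) c)) := by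
  classical
  have hp : 1 < p := (Fact.out : p.Prime).one_lt
  set m := n / b with hmdef
  have hnm : m * b = n := Nat.div_mul_cancel hbn
  have hb0 : 0 < b := by omega
  have hm0 : m ≠ 0 := by rintro h; rw [h] at hnm; omega
  have hn0 : n ≠ 0 := hn.ne'
  have hmb : m < n := by nlinarith [Nat.pos_of_ne_zero hm0]
  have hmn : m ∣ n := ⟨b, hnm.symm⟩
  letI : Fintype (GaloisField p n) := Fintype.ofFinite _
  letI : Fintype (GaloisField p m) := Fintype.ofFinite _
  have cardL : Fintype.card (GaloisField p n) = p ^ n := by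
    rw [← Nat.card_eq_fintype_card, GaloisField.card p n hn0]
  have cardF : Fintype.card (GaloisField p m) = p ^ m := by
    rw [← Nat.card_eq_fintype_card, GaloisField.card p m hm0]
  have hpn1 : 1 < p ^ n := Nat.one_lt_pow hn0 hp
  have hpm1 : 1 < p ^ m := Nat.one_lt_pow hm0 hp
  have hk0 : 0 < k := Nat.pos_of_ne_zero fun h => by
    subst h
    have h0 := Nat.eq_zero_of_zero_dvd hk.1
    omega
  have hc0 : 0 < c := Nat.pos_of_ne_zero fun h => by
    subst h; rw [Nat.mul_zero] at hkbc; omega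
  have hcq : c ∣ p ^ m - 1 := hc.1
  let e : GaloisField p m →+* GaloisField p n := (fieldEmb p m n hm0 hn0 hmn).toRingHom
  letI : Algebra (GaloisField p m) (GaloisField p n) := e.toAlgebra
  have halg : algebraMap (GaloisField p m) (GaloisField p n) = e := rfl
  haveI : Module.Finite (GaloisField p m) (GaloisField p n) := Module.Finite.of_finite
  obtain ⟨s, hs0, hsord⟩ := exists_nonzero_orderOf (L := GaloisField p n) (k := k)
    (by rw [cardL]; exact hk.1)
  have hspow : s ^ k = 1 := by rw [← hsord]; exact pow_orderOf_eq_one s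
  have hminpoly_ge : b ≤ (minpoly (GaloisField p m) s).natDegree := by
    by_contra hlt
    push_neg at hlt
    have hdvd := orderOf_dvd_card_pow_minpoly (F := GaloisField p m) (x := s) hs0
    rw [hsord, cardF, ← pow_mul] at hdvd
    have ht1 : 0 < (minpoly (GaloisField p m) s).natDegree :=
      minpoly.natDegree_pos (IsIntegral.of_finite _ s)
    refine hk.2 (m * (minpoly (GaloisField p m) s).natDegree) ?_ ?_ hdvd
    · have := Nat.pos_of_ne_zero hm0; nlinarith
    · calc m * (minpoly (GaloisField p m) s).natDegree < m * b := by
            have := Nat.pos_of_ne_zero hm0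
            exact (Nat.mul_lt_mul_left this).2 hlt
        _ = n := hnm
  have hrange : ∀ x : GaloisField p n, x ^ (p ^ m) = x → ∃ a, e a = x := fun x hx =>
    mem_range_of_pow_card e (by rw [cardF]; exact hx)
  have hspow_range : ∀ j : ℕ, k ∣ j * (p ^ m - 1) → ∃ a, e a = s ^ j := by
    intro j hj
    apply hrange
    have h1 : s ^ (j * (p ^ m - 1)) = 1 := by
      rw [← hsord] at hj; exact orderOf_dvd_iff_pow_eq_one.1 hj
    have h2 : j * (p ^ m) = j * (p ^ m - 1) + j := by
      have h3 : p ^ m - 1 + 1 = p ^ m := Nat.sub_add_cancel hpm1.le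
      rw [← h3, Nat.mul_succ, h3]
    rw [← pow_mul, h2, pow_add, h1, one_mul]
  have hEvenC : Odd p → Even c := by
    intro hodd
    by_contra hoddc
    have hcodd : Odd c := Nat.not_even_iff_odd.1 hoddc
    have hkev : Even k := heven hodd
    have hbev : Even b := by
      rcases Nat.even_mul.1 (hkbc ▸ hkev) with h | h
      · exact h
      · exact absurd h (Nat.not_even_iff_odd.2 hcodd)
    have h2 : 2 ∣ p ^ m - 1 := by
      have hpm : Odd (p ^ m) := hodd.pow
      rw [Nat.odd_iff] at hpm
      omega
    have h2c : 2 * c ∣ p ^ m - 1 :=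
      Nat.Coprime.mul_dvd_of_dvd_of_dvd (Nat.coprime_two_left.2 hcodd) h2 hcq
    have hb2 : b / 2 * 2 = b := Nat.div_two_mul_two_of_even hbev
    obtain ⟨tu, htu⟩ := hspow_range (b / 2) (by
      obtain ⟨w, hw⟩ := h2c
      refine ⟨w, ?_⟩
      rw [hkbc, hw]
      calc b / 2 * (2 * c * w) = (b / 2 * 2) * (c * w) := by ring
        _ = b * c * w := by rw [hb2]; ring)
    have hann : (Polynomial.aeval s) (X ^ (b / 2) - C tu) = 0 := by
      rw [map_sub, aeval_C, map_pow, aeval_X, halg, htu, sub_self]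
    have hnz : (X ^ (b / 2) - C tu : (GaloisField p m)[X]) ≠ 0 :=
      X_pow_sub_C_ne_zero (by omega) tu
    have hle := minpoly.degree_le_of_ne_zero (GaloisField p m) s hnz hann
    have hle2 : (minpoly (GaloisField p m) s).natDegree ≤ b / 2 := by
      have h3 := Polynomial.natDegree_le_natDegree hle
      rwa [natDegree_X_pow_sub_C] at h3
    omega
  have hsymk : (-1 : GaloisField p n) ^ k = 1 := by
    rcases Nat.even_or_odd p with hpe | hpo
    · have hp2 : p = 2 := ((Fact.out : p.Prime).even_iff).1 hpe
      subst hp2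
      rw [CharTwo.neg_eq (R := GaloisField 2 n), one_pow]
    · exact (heven hpo).neg_one_pow
  have hsymc : (-1 : GaloisField p m) ^ c = 1 := by
    rcases Nat.even_or_odd p with hpe | hpo
    · have hp2 : p = 2 := ((Fact.out : p.Prime).even_iff).1 hpe
      subst hp2
      rw [CharTwo.neg_eq (R := GaloisField 2 m), one_pow]
    · exact (hEvenC hpo).neg_one_pow
  have hadjF : ∀ x y : GaloisField p m, (gpaley p m c).Adj x y ↔ x ≠ y ∧ (x - y) ^ c = 1 :=
    gpaley_adj_iff p hm0 hc0 hcq hsymc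
  set T : Set (GaloisField p m) := {z | z ^ c = 1} with hTdef
  have hT1 : (1 : GaloisField p m) ∈ T := one_pow c
  have hTne : ∀ z ∈ T, z ≠ 0 := by
    intro z hz h0
    rw [hTdef, Set.mem_setOf_eq, h0, zero_pow hc0.ne'] at hz
    exact zero_ne_one hz
  set A : AddSubgroup (GaloisField p m) := AddSubgroup.closure T with hAdef
  have hTA : T ⊆ A := AddSubgroup.subset_closure
  have hmul : ∀ x ∈ A, ∀ y ∈ A, x * y ∈ A := by
    intro x hx
    refine AddSubgroup.closure_induction
      (p := fun x _ => ∀ y ∈ A, x * y ∈ A) ?_ ?_ ?_ ?_ hx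
    · intro t ht y hy
      refine AddSubgroup.closure_induction
        (p := fun y _ => t * y ∈ A) ?_ ?_ ?_ ?_ hy
      · intro u hu
        show t * u ∈ A
        refine hTA ?_
        rw [hTdef, Set.mem_setOf_eq] at ht hu ⊢
        rw [mul_pow, ht, hu, one_mul]
      · show t * 0 ∈ A
        rw [mul_zero]; exact A.zero_mem
      · intro y1 y2 _ _ ih1 ih2
        show t * (y1 + y2) ∈ A
        rw [mul_add]; exact A.add_mem ih1 ih2
      · intro y1 _ ih
        show t * (-y1) ∈ A
        rw [mul_neg]; exact A.neg_mem ih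
    · intro y _
      show (0 : GaloisField p m) * y ∈ A
      rw [zero_mul]; exact A.zero_mem
    · intro x1 x2 _ _ ih1 ih2 y hy
      show (x1 + x2) * y ∈ A
      rw [add_mul]; exact A.add_mem (ih1 y hy) (ih2 y hy)
    · intro x1 _ ih y hy
      show (-x1) * y ∈ A
      rw [neg_mul]; exact A.neg_mem (ih y hy)
  obtain ⟨ζ, hζ0, hζord⟩ := exists_nonzero_orderOf (L := GaloisField p m) (k := c)
    (by rw [cardF]; exact hcq)
  set M : Submonoid (GaloisField p m) :=
    { carrier := (A : Set (GaloisField p m)),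
      one_mem' := hTA hT1,
      mul_mem' := fun ha hb => hmul _ ha _ hb } with hM
  set S : Subring (GaloisField p m) := Subring.mk' (A : Set (GaloisField p m)) M A rfl rfl
    with hS
  have hmemS : ∀ x : GaloisField p m, x ∈ S ↔ x ∈ A := fun x => Subring.mem_mk' rfl rfl
  letI : Fintype S := Fintype.ofFinite _
  letI : DecidableEq ↥S := Classical.decEq _
  letI : Field ↥S := Fintype.fieldOfDomain _
  haveI : CharP ↥S p := S.subtype.charP S.subtype_injective p
  obtain ⟨a, hap, hacard⟩ := FiniteField.card ↥S p
  have hζT : ζ ∈ T := by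
    rw [hTdef, Set.mem_setOf_eq, ← hζord]; exact pow_orderOf_eq_one ζ
  have hζS : ζ ∈ S := (hmemS ζ).2 (hTA hζT)
  set ζ' : ↥S := ⟨ζ, hζS⟩ with hζ'
  have hζ'0 : ζ' ≠ 0 := fun h => hζ0 (congrArg Subtype.val h)
  have h1 : ζ' ^ (Fintype.card ↥S - 1) = 1 := FiniteField.pow_card_sub_one_eq_one ζ' hζ'0
  have hordζ' : orderOf ζ' = c := by
    rw [← hζord]
    exact (orderOf_injective S.subtype.toMonoidHom S.subtype_injective ζ').symm
  have hcdvd : c ∣ p ^ (a : ℕ) - 1 := by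
    rw [← hacard, ← hordζ']
    exact orderOf_dvd_of_pow_eq_one h1
  have ham : m ≤ (a : ℕ) := by
    by_contra hcon
    push_neg at hcon
    exact hc.2 a a.2 hcon hcdvd
  have hcardeq : Fintype.card ↥S = Fintype.card (GaloisField p m) := by
    refine le_antisymm (Fintype.card_le_of_injective S.subtype S.subtype_injective) ?_
    rw [cardF, hacard]
    exact Nat.pow_le_pow_right (by omega) ham
  have hAtop : ∀ x : GaloisField p m, x ∈ A := by
    intro x
    have hbij : Function.Bijective S.subtype :=
      (Fintype.bijective_iff_injective_and_card S.subtype).2 ⟨S.subtype_injective, hcardeq⟩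
    obtain ⟨y, hy⟩ := hbij.2 x
    rw [← hy]
    exact (hmemS _).1 y.2
  have hreach : ∀ z x : GaloisField p m, (gpaley p m c).Reachable x (x + z) := by
    intro z
    refine AddSubgroup.closure_induction
      (p := fun z _ => ∀ x, (gpaley p m c).Reachable x (x + z)) ?_ ?_ ?_ ?_ (hAtop z)
    · intro t ht x
      refine SimpleGraph.Adj.reachable ?_
      rw [hadjF]
      have htne : t ≠ 0 := hTne t ht
      rw [hTdef, Set.mem_setOf_eq] at ht
      constructor
      · intro h
        exact htne (left_eq_add.1 h)
      · have h2 : x - (x + t) = -t := by ring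
        rw [h2, neg_pow, hsymc, ht, one_mul]
    · intro x
      show (gpaley p m c).Reachable x (x + 0)
      rw [add_zero]
    · intro z1 z2 _ _ ih1 ih2 x
      refine (ih1 x).trans ?_
      have h3 := ih2 (x + z1)
      rwa [add_assoc] at h3
    · intro z1 _ ih x
      have h := (ih (x - z1)).symm
      rw [sub_add_cancel] at h
      rwa [← sub_eq_add_neg]
  have hconn : (gpaley p m c).Connected := by
    rw [SimpleGraph.connected_iff]
    refine ⟨fun x y => ?_, ⟨0⟩⟩
    have h := hreach (y - x) x
    rwa [add_comm, sub_add_cancel] at h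
  refine ⟨hEvenC, hconn, ?_⟩
  set ψ : (Fin b → GaloisField p m) → GaloisField p n :=
    fun w => ∑ i : Fin b, e (w i) * s ^ (i : ℕ) with hψdef
  have hψsub : ∀ x y, ψ x - ψ y = ψ (x - y) := by
    intro x y
    simp only [hψdef, ← Finset.sum_sub_distrib]
    refine Finset.sum_congr rfl fun i _ => ?_
    rw [Pi.sub_apply, map_sub, sub_mul]
  have hψzero : ∀ w, ψ w = 0 → w = 0 := by
    intro w hw
    by_contra hw0
    set f : (GaloisField p m)[X] := ∑ i : Fin b, Polynomial.monomial (i : ℕ) (w i) with hfdef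
    have hcoeff : ∀ j : Fin b, f.coeff (j : ℕ) = w j := by
      intro j
      rw [hfdef, Polynomial.finset_sum_coeff]
      rw [Finset.sum_eq_single j]
      · rw [Polynomial.coeff_monomial, if_pos rfl]
      · intro i _ hij
        rw [Polynomial.coeff_monomial, if_neg (fun h => hij (Fin.val_injective h))]
      · intro h; exact absurd (Finset.mem_univ j) h
    have hf0 : f ≠ 0 := by
      obtain ⟨j, hj⟩ := Function.ne_iff.1 hw0
      intro h
      apply hj
      have := hcoeff j
      rw [h, Polynomial.coeff_zero] at this
      rw [← this, Pi.zero_apply]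
    have haev : Polynomial.aeval s f = 0 := by
      rw [hfdef, map_sum, ← hw]
      simp only [hψdef]
      refine Finset.sum_congr rfl fun i _ => ?_
      rw [Polynomial.aeval_monomial, halg]
    have hdeg : f.natDegree ≤ b - 1 := by
      rw [hfdef]
      refine Polynomial.natDegree_sum_le_of_forall_le _ _ fun i _ => ?_
      refine le_trans (Polynomial.natDegree_monomial_le _) ?_
      have := i.isLt
      omega
    have hgee := Polynomial.natDegree_le_natDegree
      (minpoly.degree_le_of_ne_zero (GaloisField p m) s hf0 haev)
    omega
  have hψinj : Function.Injective ψ := by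
    intro x y hxy
    have h := hψsub x y
    rw [hxy, sub_self] at h
    exact sub_eq_zero.1 (hψzero _ h.symm)
  have hψbij : Function.Bijective ψ := by
    refine (Fintype.bijective_iff_injective_and_card ψ).2 ⟨hψinj, ?_⟩
    rw [Fintype.card_fun, cardF, cardL, Fintype.card_fin, ← pow_mul, hnm]
  obtain ⟨t0, ht0⟩ := hspow_range b (by rw [hkbc]; exact Nat.mul_dvd_mul_left b hcq)
  have ht0c : t0 ^ c = 1 := by
    apply e.injective
    rw [map_pow, ht0, map_one, ← pow_mul, ← hkbc, hspow]
  have hkey : ∀ w : Fin b → GaloisField p m,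
      ((ψ w) ^ k = 1 ↔ ∃ i : Fin b, (w i) ^ c = 1 ∧ ∀ j, j ≠ i → w j = 0) := by
    intro w
    constructor
    · intro h
      obtain ⟨j, hjk, hju⟩ := mem_powers_of_pow_eq_one hsord hk0 h
      have hj1 : j % b < b := Nat.mod_lt _ hb0
      set w' : Fin b → GaloisField p m :=
        fun i => if i = ⟨j % b, hj1⟩ then t0 ^ (j / b) else 0 with hw'
      have hst : ψ w' = s ^ j := by
        simp only [hψdef]
        rw [Finset.sum_eq_single (⟨j % b, hj1⟩ : Fin b)]
        · simp only [hw', if_pos rfl]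
          rw [map_pow, ht0, ← pow_mul, ← pow_add]
          congr 1
          exact Nat.div_add_mod j b
        · intro i _ hij
          simp only [hw', if_neg hij, map_zero, zero_mul]
        · intro h'; exact absurd (Finset.mem_univ _) h'
      have hw_eq : w = w' := hψinj (by rw [hst, hju])
      refine ⟨⟨j % b, hj1⟩, ?_, ?_⟩
      · rw [hw_eq]; simp only [hw', if_pos rfl]
        rw [← pow_mul, mul_comm, pow_mul, ht0c, one_pow]
      · intro j' hj'
        rw [hw_eq]; simp only [hw', if_neg hj']
    · rintro ⟨i, hwi, hzero⟩
      have hsum : ψ w = e (w i) * s ^ (i : ℕ) := by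
        simp only [hψdef]
        rw [Finset.sum_eq_single i]
        · intro j _ hji; rw [hzero j hji, map_zero, zero_mul]
        · intro h'; exact absurd (Finset.mem_univ _) h'
      rw [hsum, mul_pow, ← map_pow]
      have h1 : (w i) ^ k = 1 := by rw [hkbc, mul_comm, pow_mul, hwi, one_pow]
      have h2 : (s ^ (i : ℕ)) ^ k = 1 := by rw [← pow_mul, mul_comm, pow_mul, hspow, one_pow]
      rw [h1, map_one, h2, one_mul]
  have hadjL : ∀ x y : GaloisField p n, (gpaley p n k).Adj x y ↔ x ≠ y ∧ (x - y) ^ k = 1 :=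
    gpaley_adj_iff p hn0 hk0 hk.1 hsymk
  refine ⟨SimpleGraph.Iso.symm ⟨Equiv.ofBijective ψ hψbij, ?_⟩⟩
  intro X Y
  show (gpaley p n k).Adj (ψ X) (ψ Y) ↔ (boxPow b (gpaley p m c)).Adj X Y
  rw [hadjL, hψsub]
  have hbox : (boxPow b (gpaley p m c)).Adj X Y ↔
      ∃ i, (gpaley p m c).Adj (X i) (Y i) ∧ ∀ j, j ≠ i → X j = Y j := Iff.rfl
  rw [hbox, hkey (X - Y)]
  constructor
  · rintro ⟨hne, i, hi, hz⟩
    rw [Pi.sub_apply] at hi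
    refine ⟨i, ?_, ?_⟩
    · rw [hadjF]
      refine ⟨?_, hi⟩
      intro h
      rw [h, sub_self, zero_pow hc0.ne'] at hi
      exact zero_ne_one hi
    · intro j hj
      have h := hz j hj
      rw [Pi.sub_apply] at h
      exact sub_eq_zero.1 h
  · rintro ⟨i, hadj, hagree⟩
    rw [hadjF] at hadj
    have hXY : X ≠ Y := fun h => hadj.1 (congrFun h i)
    refine ⟨hψinj.ne hXY, i, ?_, ?_⟩
    · rw [Pi.sub_apply]; exact hadj.2
    · intro j hj
      rw [Pi.sub_apply, sub_eq_zero]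
      exact hagree j hj
end

section
/- Let b > 1 and let Δ be the Cartesian product Γ₁ □ Γ₂ □ … □ Γ_b of finite simple graphs Γ₁, …, Γ_b, each of which is Cartesian-prime. If Δ is connected and the automorphism group of Δ acts transitively on the arcs of Δ (ordered pairs of adjacent vertices), then the factors Γ₁, …, Γ_b are pairwise isomorphic. -/
/-- The Cartesian (box) product of a family of simple graphs: vertices are
tuples, two tuples being adjacent iff they agree in all but one coordinate
and are adjacent in that coordinate. -/
def boxProdPi {ι : Type*} {V : ι → Type*} (G : ∀ i, SimpleGraph (V i)) :
    SimpleGraph (∀ i, V i) where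
  Adj x y := ∃ i, (G i).Adj (x i) (y i) ∧ ∀ j, j ≠ i → x j = y j
  symm := by
    constructor
    rintro x y ⟨i, hadj, h⟩
    exact ⟨i, hadj.symm, fun j hj => (h j hj).symm⟩
  loopless := by
    constructor
    rintro x ⟨i, hadj, -⟩
    exact (G i).loopless.irrefl _ hadj

/-- A graph is Cartesian decomposable if it is isomorphic to a Cartesian
product of two graphs, each having at least two vertices. -/
def CartesianDecomposable {V : Type*} (G : SimpleGraph V) : Prop :=
  ∃ (V₁ V₂ : Type) (Γ₁ : SimpleGraph V₁) (Γ₂ : SimpleGraph V₂),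
    Nontrivial V₁ ∧ Nontrivial V₂ ∧ Nonempty (G ≃g Γ₁ □ Γ₂)

/-- A graph with at least two vertices is Cartesian-prime if it is not
Cartesian decomposable. -/
def CartesianPrime {V : Type*} (G : SimpleGraph V) : Prop :=
  Nontrivial V ∧ ¬ CartesianDecomposable G

open SimpleGraph

lemma iso_dist_le {γ δ : Type*} {A : SimpleGraph γ} {B : SimpleGraph δ}
    (g : A ≃g B) (u v : γ) : B.dist (g u) (g v) ≤ A.dist u v := by
  by_cases h : A.Reachable u v
  · obtain ⟨w, hw⟩ := h.exists_walk_length_eq_dist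
    calc B.dist (g u) (g v) ≤ (w.map g.toHom).length := SimpleGraph.dist_le _
      _ = w.length := w.length_map _
      _ = A.dist u v := hw
  · have h' : ¬ B.Reachable (g u) (g v) := by
      intro hr
      exact h (by simpa using hr.map (g.symm.toHom))
    rw [SimpleGraph.dist_eq_zero_of_not_reachable h,
      SimpleGraph.dist_eq_zero_of_not_reachable h']

lemma iso_dist {γ δ : Type*} {A : SimpleGraph γ} {B : SimpleGraph δ}
    (g : A ≃g B) (u v : γ) : B.dist (g u) (g v) = A.dist u v := by
  refine le_antisymm (iso_dist_le g u v) ?_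
  have := iso_dist_le g.symm (g u) (g v)
  simpa using this

/-- iso between induced subgraphs along an iso -/
def isoInduceImage {α β : Type*} {G : SimpleGraph α} {G' : SimpleGraph β}
    (f : G ≃g G') (A : Set α) : G.induce A ≃g G'.induce (⇑f '' A) where
  toEquiv := f.toEquiv.image A
  map_rel_iff' := f.map_rel_iff

/-- the box product with a one-vertex graph -/
def boxProdUniqueIso {α β : Type*} (G : SimpleGraph α) (H : SimpleGraph β) [Unique β] :
    G.boxProd H ≃g G where
  toEquiv := Equiv.prodUnique α β
  map_rel_iff' := by
    intro a b
    show G.Adj a.1 b.1 ↔ (G.boxProd H).Adj a b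
    rw [boxProd_adj]
    constructor
    · intro h; exact Or.inl ⟨h, Subsingleton.elim _ _⟩
    · rintro (⟨h, -⟩ | ⟨h, -⟩)
      · exact h
      · exact absurd (Subsingleton.elim a.2 b.2) h.ne

/-- splitting off one coordinate of a box product -/
def boxSplitIso {ι : Type} [DecidableEq ι] {W : ι → Type} (H : ∀ m, SimpleGraph (W m)) (k : ι) :
    boxProdPi H ≃g (H k □ boxProdPi (fun m : {m // m ≠ k} => H m.1)) where
  toEquiv := Equiv.piSplitAt k W
  map_rel_iff' := by
    intro u v
    show (H k □ _).Adj ⟨u k, fun m : {m // m ≠ k} => u m.1⟩ ⟨v k, fun m : {m // m ≠ k} => v m.1⟩ ↔ (boxProdPi H).Adj u v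
    rw [boxProd_adj]
    constructor
    · rintro (⟨hadj, heq⟩ | ⟨⟨m, hadj, heq⟩, hk⟩)
      · exact ⟨k, hadj, fun jj hj => congrFun heq ⟨jj, hj⟩⟩
      · refine ⟨m.1, hadj, fun jj hj => ?_⟩
        by_cases hjk : jj = k
        · subst hjk; exact hk
        · exact heq ⟨jj, hjk⟩ (fun hh => hj (congrArg Subtype.val hh))
    · rintro ⟨m, hadj, heq⟩
      by_cases hm : m = k
      · subst hm; exact Or.inl ⟨hadj, funext fun j => heq j.1 j.2⟩
      · exact Or.inr ⟨⟨⟨m, hm⟩, hadj, fun j hj => heq j.1 (fun hh => hj (Subtype.ext hh))⟩,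
          heq k (Ne.symm hm)⟩

/-- induced subgraph of a box product on a box set -/
def boxInducePiIso {ι : Type} {W : ι → Type} (H : ∀ m, SimpleGraph (W m)) (C : ∀ m, Set (W m)) :
    ((boxProdPi H).induce {z | ∀ m, z m ∈ C m}) ≃g boxProdPi (fun m => (H m).induce (C m)) where
  toEquiv := Equiv.subtypePiEquivPi
  map_rel_iff' := by
    intro u v
    constructor
    · rintro ⟨m, hadj, heq⟩
      exact ⟨m, hadj, fun j hj => congrArg Subtype.val (heq j hj)⟩
    · rintro ⟨m, hadj, heq⟩
      exact ⟨m, hadj, fun j hj => Subtype.ext (heq j hj)⟩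

/-- the layer in direction i through x -/
def layerIso {ι : Type} [DecidableEq ι] {W : ι → Type} (H : ∀ m, SimpleGraph (W m))
    (x : ∀ m, W m) (i : ι) :
    ((boxProdPi H).induce {z | ∀ k, k ≠ i → z k = x k}) ≃g H i where
  toEquiv :=
    { toFun := fun z => z.1 i
      invFun := fun v => ⟨Function.update x i v, fun k hk => Function.update_of_ne hk _ _⟩
      left_inv := by
        rintro ⟨z, hz⟩
        apply Subtype.ext
        funext k
        by_cases hk : k = i
        · subst hk; simp
        · simp [Function.update_of_ne hk, hz k hk]
      right_inv := fun v => by simp }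
  map_rel_iff' := by
    rintro ⟨z, hz⟩ ⟨w, hw⟩
    constructor
    · intro hadj
      exact ⟨i, hadj, fun j hj => (hz j hj).trans (hw j hj).symm⟩
    · rintro ⟨m, hadj, heq⟩
      by_cases hm : m = i
      · subst hm; exact hadj
      · exfalso
        have hzw : z m = w m := (hz m hm).trans (hw m hm).symm
        have h2 : (H m).Adj (z m) (w m) := hadj
        rw [hzw] at h2
        exact (H m).loopless.irrefl _ h2

section Metric
variable {b : ℕ} {V : Fin b → Type} (Γ : ∀ i, SimpleGraph (V i))

lemma proj_reachable (i : Fin b) {x y : ∀ m, V m} (h : (boxProdPi Γ).Reachable x y) :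
    (Γ i).Reachable (x i) (y i) := by
  obtain ⟨w⟩ := h
  induction w with
  | nil => exact Reachable.refl _
  | @cons u m y h p ih =>
    obtain ⟨k, hadj, heq⟩ := h
    by_cases hk : i = k
    · subst hk; exact (hadj.reachable).trans ih
    · rw [heq i hk]; exact ih

lemma factor_connected (hconn : (boxProdPi Γ).Connected) (i : Fin b) : (Γ i).Connected := by
  obtain ⟨z⟩ := hconn.nonempty
  haveI : Nonempty (V i) := ⟨z i⟩
  refine ⟨fun a c => ?_⟩
  have h := hconn.preconnected (Function.update z i a) (Function.update z i c)
  have h2 := proj_reachable Γ i h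
  simpa using h2

lemma walk_length_ge (hconn : (boxProdPi Γ).Connected) {x y : ∀ m, V m}
    (w : (boxProdPi Γ).Walk x y) :
    ∑ i, (Γ i).dist (x i) (y i) ≤ w.length := by
  induction w with
  | nil => simp
  | @cons x m y h p ih =>
    obtain ⟨k, hadj, heq⟩ := h
    show _ ≤ p.length + 1
    have hstep : ∀ i, (Γ i).dist (x i) (y i) ≤ (Γ i).dist (m i) (y i) + (if i = k then 1 else 0) := by
      intro i
      by_cases hk : i = k
      · subst hk
        rw [if_pos rfl]
        have h1 : (Γ i).dist (x i) (y i) ≤ (Γ i).dist (x i) (m i) + (Γ i).dist (m i) (y i) :=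
          (factor_connected Γ hconn i).dist_triangle
        have h2 : (Γ i).dist (x i) (m i) ≤ 1 := by
          simpa using SimpleGraph.dist_le hadj.toWalk
        omega
      · rw [heq i hk, if_neg hk]
        simp
    calc ∑ i, (Γ i).dist (x i) (y i)
        ≤ ∑ i, ((Γ i).dist (m i) (y i) + (if i = k then 1 else 0)) :=
          Finset.sum_le_sum (fun i _ => hstep i)
      _ = (∑ i, (Γ i).dist (m i) (y i)) + 1 := by rw [Finset.sum_add_distrib]; simp
      _ ≤ p.length + 1 := by omega

lemma lift_walk (i : Fin b) {a c : V i} (w : (Γ i).Walk a c) (x : ∀ m, V m) :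
    ∃ w' : (boxProdPi Γ).Walk (Function.update x i a) (Function.update x i c),
      w'.length = w.length := by
  induction w with
  | nil => exact ⟨SimpleGraph.Walk.nil, rfl⟩
  | @cons a a' c h p ih =>
    obtain ⟨w', hw'⟩ := ih
    have hadj : (boxProdPi Γ).Adj (Function.update x i a) (Function.update x i a') :=
      ⟨i, by simpa using h, fun j hj => by simp [Function.update_of_ne hj]⟩
    exact ⟨SimpleGraph.Walk.cons hadj w', by simp [hw']⟩

lemma exists_walk_sum (hconn : (boxProdPi Γ).Connected) (s : Finset (Fin b)) :
    ∀ (x y : ∀ m, V m), (∀ i, i ∉ s → x i = y i) →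
      ∃ w : (boxProdPi Γ).Walk x y, w.length = ∑ i ∈ s, (Γ i).dist (x i) (y i) := by
  classical
  induction s using Finset.induction_on with
  | empty =>
    intro x y h
    have hxy : x = y := funext fun i => h i (Finset.notMem_empty i)
    subst hxy
    exact ⟨SimpleGraph.Walk.nil, by simp⟩
  | @insert a s ha ih =>
    intro x y h
    set m := Function.update x a (y a) with hm
    obtain ⟨w0, hw0⟩ := (factor_connected Γ hconn a).exists_walk_length_eq_dist (x a) (y a)
    obtain ⟨w1', hw1'⟩ := lift_walk Γ a w0 x
    have hx : Function.update x a (x a) = x := Function.update_eq_self a x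
    set w1 := w1'.copy hx rfl with hw1def
    have hw1 : w1.length = w0.length := by rw [hw1def, SimpleGraph.Walk.length_copy]; exact hw1'
    obtain ⟨w2, hw2⟩ := ih m y (by
      intro i hi
      by_cases hia : i = a
      · subst hia; simp [hm]
      · have : i ∉ insert a s := by simp [hia, hi]
        rw [hm, Function.update_of_ne hia]
        exact h i this)
    refine ⟨w1.append w2, ?_⟩
    rw [SimpleGraph.Walk.length_append, hw1, hw0, hw2, Finset.sum_insert ha]
    congr 1
    apply Finset.sum_congr rfl
    intro i hi
    have hia : i ≠ a := fun hh => ha (hh ▸ hi)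
    rw [hm, Function.update_of_ne hia]

lemma boxDist (hconn : (boxProdPi Γ).Connected) (x y : ∀ m, V m) :
    (boxProdPi Γ).dist x y = ∑ i, (Γ i).dist (x i) (y i) := by
  refine le_antisymm ?_ ?_
  · obtain ⟨w, hw⟩ := exists_walk_sum Γ hconn Finset.univ x y (fun i hi => absurd (Finset.mem_univ i) hi)
    exact hw ▸ SimpleGraph.dist_le w
  · obtain ⟨w, hw⟩ := hconn.exists_walk_length_eq_dist x y
    exact hw ▸ walk_length_ge Γ hconn w

end Metric

section Core
variable {b : ℕ} {V : Fin b → Type} {Γ : ∀ i, SimpleGraph (V i)}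

lemma layer_convex (hconn : (boxProdPi Γ).Connected) (x : ∀ m, V m) (i : Fin b)
    (u v w : ∀ m, V m) (hu : ∀ k, k ≠ i → u k = x k) (hw : ∀ k, k ≠ i → w k = x k)
    (hd : (boxProdPi Γ).dist u v + (boxProdPi Γ).dist v w = (boxProdPi Γ).dist u w) :
    ∀ k, k ≠ i → v k = x k := by
  intro k hk
  rw [boxDist Γ hconn, boxDist Γ hconn, boxDist Γ hconn, ← Finset.sum_add_distrib] at hd
  have hle : ∀ j ∈ Finset.univ,
      (Γ j).dist (u j) (w j) ≤ (Γ j).dist (u j) (v j) + (Γ j).dist (v j) (w j) :=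
    fun j _ => (factor_connected Γ hconn j).dist_triangle
  have hterm := (Finset.sum_eq_sum_iff_of_le hle).mp hd.symm k (Finset.mem_univ k)
  have huw : u k = w k := (hu k hk).trans (hw k hk).symm
  rw [← huw, SimpleGraph.dist_self] at hterm
  have h0 : (Γ k).dist (u k) (v k) = 0 := by omega
  have := ((factor_connected Γ hconn k).dist_eq_zero_iff).mp h0
  rw [← this, hu k hk]

lemma mix_dist (hconn : (boxProdPi Γ).Connected) (u w z : ∀ m, V m)
    (hz : ∀ k, z k = u k ∨ z k = w k) :
    (boxProdPi Γ).dist u z + (boxProdPi Γ).dist z w = (boxProdPi Γ).dist u w := by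
  rw [boxDist Γ hconn, boxDist Γ hconn, boxDist Γ hconn, ← Finset.sum_add_distrib]
  apply Finset.sum_congr rfl
  intro k _
  rcases hz k with h | h
  · rw [h, SimpleGraph.dist_self]; omega
  · rw [h, SimpleGraph.dist_self]; omega

lemma core (hprime : ∀ i, CartesianPrime (Γ i)) (hconn : (boxProdPi Γ).Connected)
    {i j : Fin b} {x y : ∀ m, V m}
    (hxyadj : (Γ i).Adj (x i) (y i)) (hxyeq : ∀ k, k ≠ i → x k = y k)
    (f : boxProdPi Γ ≃g boxProdPi Γ)
    (hjadj : (Γ j).Adj (f x j) (f y j)) (hjeq : ∀ k, k ≠ j → f x k = f y k) :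
    ∃ C : Set (V j), Nonempty (Γ i ≃g (Γ j).induce C) := by
  classical
  set L : Set (∀ m, V m) := {z | ∀ k, k ≠ i → z k = x k} with hL
  set S : Set (∀ m, V m) := ⇑f '' L with hS
  have hxL : x ∈ L := fun k _ => rfl
  have hyL : y ∈ L := fun k hk => (hxyeq k hk).symm
  have hfxS : f x ∈ S := ⟨x, hxL, rfl⟩
  have hfyS : f y ∈ S := ⟨y, hyL, rfl⟩
  have hSconv : ∀ u v w, u ∈ S → w ∈ S →
      (boxProdPi Γ).dist u v + (boxProdPi Γ).dist v w = (boxProdPi Γ).dist u w → v ∈ S := by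
    rintro u v w ⟨u', hu', rfl⟩ ⟨w', hw', rfl⟩ hd
    refine ⟨f.symm v, ?_, by simp⟩
    have h1 : (boxProdPi Γ).dist (f u') v = (boxProdPi Γ).dist u' (f.symm v) := by
      conv_lhs => rw [show v = f (f.symm v) by simp]
      exact iso_dist f u' (f.symm v)
    have h2 : (boxProdPi Γ).dist v (f w') = (boxProdPi Γ).dist (f.symm v) w' := by
      conv_lhs => rw [show v = f (f.symm v) by simp]
      exact iso_dist f _ w'
    have h3 : (boxProdPi Γ).dist (f u') (f w') = (boxProdPi Γ).dist u' w' := iso_dist f u' w'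
    rw [h1, h2, h3] at hd
    exact layer_convex hconn x i u' (f.symm v) w' hu' hw' hd
  have hmix : ∀ u w z, u ∈ S → w ∈ S → (∀ k, z k = u k ∨ z k = w k) → z ∈ S :=
    fun u w z hu hw hz => hSconv u z w hu hw (mix_dist hconn u w z hz)
  set C : ∀ m, Set (V m) := fun m => (fun t => t m) '' S with hC
  have hCne : ∀ m, (f x) m ∈ C m := fun m => ⟨f x, hfxS, rfl⟩
  have hbox : S = {z | ∀ m, z m ∈ C m} := by
    apply Set.Subset.antisymm
    · intro t ht m; exact ⟨t, ht, rfl⟩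
    · intro z hz
      have key : ∀ s : Finset (Fin b), ∃ t, t ∈ S ∧ ∀ k ∈ s, t k = z k := by
        intro s
        induction s using Finset.induction_on with
        | empty => exact ⟨f x, hfxS, by simp⟩
        | @insert a s ha ih =>
          obtain ⟨t, htS, ht⟩ := ih
          obtain ⟨sa, hsaS, hsak⟩ := hz a
          refine ⟨Function.update t a (sa a), hmix t sa _ htS hsaS ?_, ?_⟩
          · intro k
            by_cases hk : k = a
            · subst hk; right; simp
            · left; simp [Function.update_of_ne hk]
          · intro k hk
            by_cases hka : k = a
            · subst hka; simp [hsak]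
            · have hks : k ∈ s := by
                rcases Finset.mem_insert.mp hk with h | h
                · exact absurd h hka
                · exact h
              rw [Function.update_of_ne hka]
              exact ht k hks
      obtain ⟨t, htS, ht⟩ := key Finset.univ
      have : t = z := funext fun k => ht k (Finset.mem_univ k)
      exact this ▸ htS
  have e1 : Γ i ≃g (boxProdPi Γ).induce L := (layerIso Γ x i).symm
  have e2 : (boxProdPi Γ).induce L ≃g (boxProdPi Γ).induce S := by rw [hS]; exact isoInduceImage f L
  have e3 : (boxProdPi Γ).induce S ≃g boxProdPi (fun m => (Γ m).induce (C m)) := by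
    rw [hbox]; exact boxInducePiIso Γ C
  have eΓ : Γ i ≃g boxProdPi (fun m => (Γ m).induce (C m)) := (e1.trans e2).trans e3
  have hsub : ∀ k, k ≠ j → ∀ u v : V k, u ∈ C k → v ∈ C k → u = v := by
    intro k hkj u v hu hv
    by_contra hne
    apply (hprime i).2
    refine ⟨↥(C k), (∀ m : {m // m ≠ k}, ↥(C m.1)), (Γ k).induce (C k),
      boxProdPi (fun m : {m // m ≠ k} => (Γ m.1).induce (C m.1)), ?_, ?_,
      ⟨eΓ.trans (boxSplitIso _ k)⟩⟩
    · exact ⟨⟨u, hu⟩, ⟨v, hv⟩, fun h => hne (congrArg Subtype.val h)⟩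
    · have hjk : j ≠ k := Ne.symm hkj
      refine ⟨fun m => ⟨f x m.1, hCne m.1⟩,
        Function.update (fun m => ⟨f x m.1, hCne m.1⟩) ⟨j, hjk⟩ ⟨f y j, ⟨f y, hfyS, rfl⟩⟩,
        fun h => ?_⟩
      have h2 := congrArg Subtype.val (congrFun h ⟨j, hjk⟩)
      simp only [Function.update_self] at h2
      exact hjadj.ne h2
  haveI : ∀ m : {m // m ≠ j}, Unique ↥(C m.1) := fun m =>
    { default := ⟨f x m.1, hCne m.1⟩
      uniq := fun a => Subtype.ext (hsub m.1 m.2 a.1 (f x m.1) a.2 (hCne m.1)) }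
  exact ⟨C j, ⟨(eΓ.trans (boxSplitIso _ j)).trans (boxProdUniqueIso _ _)⟩⟩

end Core


/-- If `Δ = Γ₁ □ … □ Γ_b` (with `b > 1`) is a Cartesian product of
finite Cartesian-prime simple graphs, `Δ` is connected, and the automorphism
group of `Δ` is transitive on arcs, then the factors are pairwise isomorphic. -/
theorem factors_pairwise_iso_of_arcTransitive (b : ℕ) (hb : 1 < b)
    (V : Fin b → Type) [∀ i, Fintype (V i)] (Γ : ∀ i, SimpleGraph (V i))
    (hprime : ∀ i, CartesianPrime (Γ i))
    (hconn : (boxProdPi Γ).Connected)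
    (harc : ∀ x y x' y' : ∀ i, V i, (boxProdPi Γ).Adj x y → (boxProdPi Γ).Adj x' y' →
      ∃ f : boxProdPi Γ ≃g boxProdPi Γ, f x = x' ∧ f y = y') :
    ∀ i j, Nonempty (Γ i ≃g Γ j) := by
  classical
  have hedge : ∀ k : Fin b, ∃ a c : V k, (Γ k).Adj a c := by
    intro k
    obtain ⟨a, c, hac⟩ := (hprime k).1
    obtain ⟨w⟩ := (factor_connected Γ hconn k).preconnected a c
    cases w with
    | nil => exact absurd rfl hac
    | cons h p => exact ⟨_, _, h⟩
  obtain ⟨z⟩ := hconn.nonempty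
  have harcpair : ∀ k : Fin b, ∃ x y : ∀ m, V m,
      (Γ k).Adj (x k) (y k) ∧ ∀ m, m ≠ k → x m = y m := by
    intro k
    obtain ⟨a, c, h⟩ := hedge k
    exact ⟨Function.update z k a, Function.update z k c, by simpa using h,
      fun m hm => by simp [Function.update_of_ne hm]⟩
  have step : ∀ i j : Fin b, ∃ C : Set (V j), Nonempty (Γ i ≃g (Γ j).induce C) := by
    intro i j
    obtain ⟨x, y, hadji, heqi⟩ := harcpair i
    obtain ⟨x', y', hadjj, heqj⟩ := harcpair j
    obtain ⟨f, hfx, hfy⟩ := harc x y x' y' ⟨i, hadji, heqi⟩ ⟨j, hadjj, heqj⟩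
    exact core hprime hconn hadji heqi f (by rw [hfx, hfy]; exact hadjj)
      (by intro k hk; rw [hfx, hfy]; exact heqj k hk)
  intro i j
  obtain ⟨C, ⟨e⟩⟩ := step i j
  obtain ⟨D, ⟨e'⟩⟩ := step j i
  haveI : Fintype ↥C := Fintype.ofFinite _
  haveI : Fintype ↥D := Fintype.ofFinite _
  have c1 : Fintype.card (V i) = Fintype.card ↥C := Fintype.card_congr e.toEquiv
  have c2 : Fintype.card (V j) = Fintype.card ↥D := Fintype.card_congr e'.toEquiv
  have c3 : Fintype.card ↥C ≤ Fintype.card (V j) :=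
    Fintype.card_le_of_injective _ Subtype.val_injective
  have c4 : Fintype.card ↥D ≤ Fintype.card (V i) :=
    Fintype.card_le_of_injective _ Subtype.val_injective
  have hcc : Fintype.card ↥C = Fintype.card (V j) := by omega
  have hCuniv : C = Set.univ := by
    rw [← Set.toFinset_eq_univ]
    apply Finset.eq_univ_of_card
    rw [Set.toFinset_card]
    exact hcc
  have efin : (Γ j).induce C ≃g Γ j := by
    rw [hCuniv]; exact SimpleGraph.induceUnivIso (Γ j)
  exact ⟨e.trans efin⟩
end

section
/- Let p be a prime, n a positive integer, and k a primitive divisor of p^n − 1 such that k is even if p is odd. Suppose k = b·c with b > 1, b dividing n, and c a primitive divisor of p^{n/b} − 1, and write d = (p^n − 1)/k. Let ξ be a generator of the cyclic group GF(p^n)^*. Then the set {ξ^{d·1}, ξ^{d·2}, …, ξ^{d·b}} is a basis of GF(p^n) regarded as a vector space over its unique subfield of order p^{n/b}. -/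
set_option maxHeartbeats 1000000
set_option synthInstance.maxHeartbeats 400000


/-- With `k = b * c` a primitive divisor of `p^n - 1` (even if `p`
is odd), `b > 1`, `b ∣ n`, `c` a primitive divisor of `p^(n/b) - 1`,
`d = (p^n - 1)/k`, and `ξ` a generator of `GF(p^n)ˣ`, the set
`{ξ^(d·1), …, ξ^(d·b)}` is a basis of `GF(p^n)` as a vector space over its
unique subfield `K` of order `p^(n/b)`. -/
theorem gpaley_power_basis (p n k b c : ℕ) [Fact p.Prime] (hn : 0 < n)
    (hk : IsPrimitiveDivisor p n k) (heven : Odd p → Even k)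
    (hkbc : k = b * c) (hb : 1 < b) (hbn : b ∣ n)
    (hc : IsPrimitiveDivisor p (n / b) c)
    (ξ : (GaloisField p n)ˣ) (hξ : Subgroup.zpowers ξ = ⊤)
    (K : Subfield (GaloisField p n)) (hK : Nat.card K = p ^ (n / b)) :
    LinearIndependent K
        (fun i : Fin b => (ξ : GaloisField p n) ^ ((p ^ n - 1) / k * (i.val + 1))) ∧
      Submodule.span K
          (Set.range fun i : Fin b =>
            (ξ : GaloisField p n) ^ ((p ^ n - 1) / k * (i.val + 1))) = ⊤ := by
  classical
  set F := GaloisField p n with hF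
  have instF : Fintype F := Fintype.ofFinite F
  have instK : Fintype K := Fintype.ofFinite K
  have hp : p.Prime := Fact.out
  have hp1 : 2 ≤ p := hp.two_le
  set m := n / b with hm
  have hm1 : 1 ≤ m := Nat.one_le_div_iff (by omega) |>.2 (Nat.le_of_dvd hn hbn)
  have hmb : m * b = n := Nat.div_mul_cancel hbn
  have hcardF : Fintype.card F = p ^ n := by
    rw [← Nat.card_eq_fintype_card]; exact GaloisField.card p n hn.ne'
  have hN1 : 1 < p ^ n := one_lt_pow₀ hp1 hn.ne'
  have hN0 : p ^ n - 1 ≠ 0 := by omega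
  have hk0 : k ≠ 0 := by
    rintro rfl
    exact hN0 (Nat.eq_zero_of_zero_dvd hk.1)
  set d := (p ^ n - 1) / k with hd
  -- order of ξ
  have hcardU : Fintype.card Fˣ = p ^ n - 1 := by
    rw [Fintype.card_units, hcardF]
  have hordξ : orderOf ξ = p ^ n - 1 := by
    rw [orderOf_eq_card_of_forall_mem_zpowers (fun y => by rw [hξ]; trivial),
      Nat.card_eq_fintype_card, hcardU]
  set η : F := (ξ : F) ^ d with hη
  have hηu : η = ((ξ ^ d : Fˣ) : F) := by push_cast [hη]; ring
  have hη0 : η ≠ 0 := by rw [hηu]; exact Units.ne_zero _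
  have hordη : orderOf η = k := by
    rw [hηu, orderOf_units, orderOf_pow, hordξ, hd,
      Nat.gcd_eq_right (Nat.div_dvd_of_dvd hk.1), Nat.div_div_self hk.1 hN0]
  -- card K
  have hcardK : Fintype.card K = p ^ m := by rw [← Nat.card_eq_fintype_card, hK]
  have instFD : Module.Finite K F := Module.Finite.of_finite
  -- finrank K F = b
  have hrank : Module.finrank K F = b := by
    have h1 : Fintype.card F = Fintype.card K ^ Module.finrank K F :=
      Module.card_eq_pow_finrank
    rw [hcardF, hcardK, ← pow_mul] at h1
    have h2 := Nat.pow_right_injective hp1 h1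
    have h3 : m * Module.finrank (↥K) F = m * b := by rw [hmb]; exact h2.symm
    exact Nat.eq_of_mul_eq_mul_left (by omega) h3
  -- η is integral
  have hint : IsIntegral K η := .of_finite K η
  -- adjoin K η = ⊤
  have hadj : IntermediateField.adjoin K {η} = ⊤ := by
    set E := IntermediateField.adjoin K {η} with hE
    have instE : Fintype E := Fintype.ofFinite E
    have instFE : Module.Finite K E := Module.Finite.of_finite
    set e := Module.finrank K (↥E) with he
    have htower : Module.finrank K (↥E) * Module.finrank (↥E) F = Module.finrank K F :=
      Module.finrank_mul_finrank K (↥E) F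
    rw [hrank, ← he] at htower
    have he1 : 1 ≤ e := he ▸ Module.finrank_pos
    have heb : e ≤ b := Nat.le_of_dvd (by omega) ⟨_, htower.symm⟩
    have hcardE : Fintype.card E = p ^ (m * e) := by
      have h1 : Fintype.card E = Fintype.card K ^ e := Module.card_eq_pow_finrank
      rw [h1, hcardK, ← pow_mul]
    have hηE : η ∈ E := IntermediateField.mem_adjoin_simple_self K η
    have hpow : η ^ (p ^ (m * e) - 1) = 1 := by
      have h2 : (⟨η, hηE⟩ : E) ^ (Fintype.card E - 1) = 1 :=
        FiniteField.pow_card_sub_one_eq_one _ (fun h0 => hη0 (by simpa using congrArg Subtype.val h0))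
      rw [hcardE] at h2
      simpa using congrArg (Subtype.val) h2
    have hdvd : k ∣ p ^ (m * e) - 1 := by
      rw [← hordη]; exact orderOf_dvd_of_pow_eq_one hpow
    have heb' : e = b := by
      by_contra hne
      have hlt : m * e < n := by
        have : e < b := lt_of_le_of_ne heb hne
        nlinarith
      exact hk.2 (m * e) (by nlinarith) hlt hdvd
    have hfr : Module.finrank K (↥E) = Module.finrank K (↥(⊤ : IntermediateField K F)) := by
      rw [← he, heb', IntermediateField.finrank_top', hrank]
    exact IntermediateField.eq_of_le_of_finrank_eq le_top hfr
  -- power basis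
  set pb := IntermediateField.adjoin.powerBasis hint with hpb
  have hdim : pb.dim = b := by
    have hfr : Module.finrank K (↥(IntermediateField.adjoin K {η})) = b := by
      rw [hadj, IntermediateField.finrank_top', hrank]
    rw [hpb, IntermediateField.adjoin.powerBasis_dim, ← IntermediateField.adjoin.finrank hint,
      hfr]
  let eqv : (↥(IntermediateField.adjoin K {η})) ≃ₐ[K] F :=
    (IntermediateField.equivOfEq hadj).trans IntermediateField.topEquiv
  have heqv : ∀ x : (↥(IntermediateField.adjoin K {η})), eqv x = (x : F) := fun x => rfl
  -- multiplication by η as a linear equivalence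
  let mulη : F ≃ₗ[K] F :=
    LinearEquiv.ofLinear (LinearMap.mulLeft K η) (LinearMap.mulLeft K η⁻¹)
      (by ext x; simp [LinearMap.mulLeft_apply, ← mul_assoc, mul_inv_cancel₀ hη0])
      (by ext x; simp [LinearMap.mulLeft_apply, ← mul_assoc, inv_mul_cancel₀ hη0])
  let B : Module.Basis (Fin b) K F :=
    ((pb.basis.map eqv.toLinearEquiv).map mulη).reindex (finCongr hdim)
  have hB : ∀ i : Fin b, B i = (ξ : F) ^ ((p ^ n - 1) / k * (i.val + 1)) := by
    intro i
    have hstep : B i = η * (η ^ (i : ℕ)) := by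
      simp only [B, Module.Basis.reindex_apply, Module.Basis.map_apply]
      rw [pb.basis_eq_pow]
      have hgen : (eqv ((pb.gen) ^ (((finCongr hdim).symm i : Fin pb.dim) : ℕ)) : F)
          = η ^ ((((finCongr hdim).symm i : Fin pb.dim)) : ℕ) := by
        rw [heqv]
        push_cast
        congr 1
      simp only [AlgEquiv.toLinearEquiv_apply]
      rw [hgen]
      simp [mulη, LinearMap.mulLeft_apply]
    rw [hstep, ← pow_succ', hη, ← pow_mul]
  have hfun : (fun i : Fin b => (ξ : F) ^ ((p ^ n - 1) / k * (i.val + 1))) = ⇑B := by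
    funext i; rw [hB]
  constructor
  · rw [hfun]; exact B.linearIndependent
  · rw [hfun]; exact B.span_eq
end

section
/- Let p be a prime, n a positive integer, and k a primitive divisor of p^n − 1 such that k is even if p is odd. Suppose k = b·c with b > 1, b dividing n, and c a primitive divisor of p^{n/b} − 1, and write d = (p^n − 1)/k. Let ξ be a generator of GF(p^n)^* and let C = ⟨ξ^{(p^n−1)/c}⟩ be the subgroup of GF(p^n)^* of order c. Then for each j with 1 ≤ j ≤ b, the additive subgroup of GF(p^n) generated by the coset C·ξ^{d·j} equals the set { λ·ξ^{d·j} : λ ∈ K }, where K is the unique subfield of GF(p^n) of order p^{n/b}. -/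
open Polynomial

lemma subfield_eq_fixed {G : Type*} [Field G] [Finite G] (p t : ℕ) (hp : 1 < p) (ht : t ≠ 0)
    (K : Subfield G) (hK : Nat.card K = p ^ t) :
    (K : Set G) = {x : G | x ^ p ^ t = x} := by
  classical
  refine Set.eq_of_subset_of_ncard_le ?_ ?_ (Set.toFinite _)
  · intro x hx
    haveI : Fintype K := Fintype.ofFinite K
    have h1 : (⟨x, hx⟩ : K) ^ p ^ t = ⟨x, hx⟩ := by
      rw [← hK, Nat.card_eq_fintype_card]; exact FiniteField.pow_card _
    simpa using congrArg Subtype.val h1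
  · have hroots : {x : G | x ^ p ^ t = x} ⊆
        ((X ^ p ^ t - X : G[X]).roots.toFinset : Set G) := by
      intro x hx
      simp only [Set.mem_setOf_eq] at hx
      simp only [Finset.coe_sort_coe, Multiset.mem_toFinset, Finset.mem_coe,
        mem_roots (FiniteField.X_pow_card_pow_sub_X_ne_zero G ht hp)]
      simp [IsRoot, hx]
    calc ({x : G | x ^ p ^ t = x}).ncard
        ≤ ((X ^ p ^ t - X : G[X]).roots.toFinset : Set G).ncard :=
          Set.ncard_le_ncard hroots (Set.toFinite _)

      _ = (X ^ p ^ t - X : G[X]).roots.toFinset.card := Set.ncard_coe_finset _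
      _ ≤ Multiset.card (X ^ p ^ t - X : G[X]).roots := Multiset.toFinset_card_le _
      _ ≤ (X ^ p ^ t - X : G[X]).natDegree := card_roots' _
      _ = p ^ t := FiniteField.X_pow_card_pow_sub_X_natDegree_eq G ht hp
      _ = (K : Set G).ncard := by rw [← hK, ← Nat.card_coe_set_eq]; rfl

lemma exists_subring_carrier {G : Type*} [Field G] (gv : G) :
    ∃ F : Subring G,
      (F : Set G) = (AddSubgroup.closure (Set.range fun m : ℕ => gv ^ m) : Set G) := by
  have hmul : ∀ x ∈ AddSubgroup.closure (Set.range fun m : ℕ => gv ^ m),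
      ∀ y ∈ AddSubgroup.closure (Set.range fun m : ℕ => gv ^ m),
      x * y ∈ AddSubgroup.closure (Set.range fun m : ℕ => gv ^ m) := by
    intro x hx
    induction hx using AddSubgroup.closure_induction with
    | mem x hx =>
      intro y hy
      induction hy using AddSubgroup.closure_induction with
      | mem y hy =>
        obtain ⟨a, rfl⟩ := hx; obtain ⟨b, rfl⟩ := hy
        exact AddSubgroup.subset_closure ⟨a + b, by simp [pow_add]⟩
      | zero => simpa using AddSubgroup.zero_mem _
      | add y z _ _ hy hz => rw [mul_add]; exact AddSubgroup.add_mem _ hy hz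
      | neg y _ hy => rw [mul_neg]; exact AddSubgroup.neg_mem _ hy
    | zero => intro y hy; simpa using AddSubgroup.zero_mem _
    | add x z _ _ hx hz =>
      intro y hy; rw [add_mul]; exact AddSubgroup.add_mem _ (hx y hy) (hz y hy)
    | neg x _ hx =>
      intro y hy; rw [neg_mul]; exact AddSubgroup.neg_mem _ (hx y hy)
  refine ⟨{ carrier := (AddSubgroup.closure (Set.range fun m : ℕ => gv ^ m) : Set G)
            zero_mem' := AddSubgroup.zero_mem _
            add_mem' := fun h1 h2 => AddSubgroup.add_mem _ h1 h2
            neg_mem' := fun h => AddSubgroup.neg_mem _ h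
            one_mem' := AddSubgroup.subset_closure ⟨0, pow_zero gv⟩
            mul_mem' := fun h1 h2 => hmul _ h1 _ h2 }, rfl⟩

lemma closure_range_pow_eq_subfield {G : Type*} [Field G] [Finite G]
    {p nn t c : ℕ} (hpp : p.Prime) (ht : t ≠ 0)
    (hG : Nat.card G = p ^ nn)
    (K : Subfield G) (hK : Nat.card K = p ^ t)
    (gv : G) (hgv0 : gv ≠ 0) (hgvK : gv ∈ K) (hord : orderOf gv = c)
    (hc2 : ∀ a : ℕ, 1 ≤ a → a < t → ¬ c ∣ p ^ a - 1) :
    (AddSubgroup.closure (Set.range fun m : ℕ => gv ^ m) : Set G) = (K : Set G) := by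
  obtain ⟨F, hF⟩ := exists_subring_carrier gv
  have hFK : (F : Set G) ⊆ (K : Set G) := by
    rw [hF]
    intro x hx
    refine AddSubgroup.closure_induction ?_ ?_ ?_ ?_ hx
    · rintro x ⟨m, rfl⟩; exact pow_mem hgvK m
    · exact K.zero_mem
    · exact fun a b _ _ ha hb => K.add_mem ha hb
    · exact fun a _ ha => K.neg_mem ha
  letI : Field F := (Finite.isField_of_domain F).toField
  have hgvF : gv ∈ F := by
    rw [← SetLike.mem_coe, hF]
    exact AddSubgroup.subset_closure ⟨1, pow_one gv⟩
  set gF : F := ⟨gv, hgvF⟩ with hgF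
  have hgF0 : gF ≠ 0 := by
    intro h; exact hgv0 (congrArg Subtype.val h)
  have hordF : orderOf gF = c := by
    rw [← hord]
    exact (orderOf_injective F.subtype.toMonoidHom (by exact Subtype.coe_injective) gF).symm
  have hdvd : c ∣ Nat.card F - 1 := by
    rw [← Nat.card_units]
    have := orderOf_dvd_natCard (Units.mk0 gF hgF0)
    rwa [← orderOf_units, Units.val_mk0, hordF] at this
  -- cardinality of F is a power of p
  have hcardF : Nat.card F = Nat.card (AddSubgroup.closure (Set.range fun m : ℕ => gv ^ m)) :=
    Nat.card_congr (Equiv.setCongr hF)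
  have hdvdG : Nat.card F ∣ p ^ nn := by
    rw [hcardF, ← hG]
    exact AddSubgroup.card_addSubgroup_dvd_card _
  obtain ⟨m, hmle, hm⟩ := (Nat.dvd_prime_pow hpp).1 hdvdG
  have hp : 1 < p := hpp.one_lt
  -- 2 ≤ card F
  have h2F : 1 < Nat.card F := Finite.one_lt_card_iff_nontrivial.mpr inferInstance
  have hm1 : 1 ≤ m := by
    rcases Nat.eq_zero_or_pos m with h0 | h1
    · rw [h0, pow_zero] at hm; omega
    · exact h1
  -- m ≤ t
  have hle : Nat.card F ≤ Nat.card K := by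
    have h1 : Nat.card F = (F : Set G).ncard := by
      rw [← Nat.card_coe_set_eq]; rfl
    have h2 : Nat.card K = (K : Set G).ncard := by
      rw [← Nat.card_coe_set_eq]; rfl
    rw [h1, h2]
    exact Set.ncard_le_ncard hFK (Set.toFinite _)
  have hmt : m ≤ t := by
    rw [hm, hK] at hle
    exact (Nat.pow_le_pow_iff_right hp).mp hle
  -- m = t by primitivity
  have hmeq : m = t := by
    rcases lt_or_eq_of_le hmt with hlt | heq
    · exact absurd (hm ▸ hdvd) (hc2 m hm1 hlt)
    · exact heq
  -- conclude set equality
  have hcard : (K : Set G).ncard ≤ (F : Set G).ncard := by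
    have h1 : Nat.card F = (F : Set G).ncard := by
      rw [← Nat.card_coe_set_eq]; rfl
    have h2 : Nat.card K = (K : Set G).ncard := by
      rw [← Nat.card_coe_set_eq]; rfl
    rw [← h1, ← h2, hm, hK, hmeq]
  rw [← hF]
  exact Set.eq_of_subset_of_ncard_le hFK hcard (Set.toFinite _) ▸ rfl



/-- With `k = b * c` a primitive divisor of `p^n - 1` (even if `p`
is odd), `b > 1`, `b ∣ n`, `c` a primitive divisor of `p^(n/b) - 1`,
`d = (p^n - 1)/k`, `ξ` a generator of `GF(p^n)ˣ`, and `C = ⟨ξ^((p^n-1)/c)⟩` the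
subgroup of order `c`, for each `1 ≤ j ≤ b` the additive subgroup of `GF(p^n)`
generated by the coset `C·ξ^(d·j)` equals `{λ·ξ^(d·j) : λ ∈ K}`, where `K` is
the unique subfield of order `p^(n/b)`. -/
theorem addClosure_coset_eq_subfield_line (p n k b c : ℕ) [Fact p.Prime]
    (hn : 0 < n) (hk : IsPrimitiveDivisor p n k) (heven : Odd p → Even k)
    (hkbc : k = b * c) (hb : 1 < b) (hbn : b ∣ n)
    (hc : IsPrimitiveDivisor p (n / b) c)
    (ξ : (GaloisField p n)ˣ) (hξ : Subgroup.zpowers ξ = ⊤)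
    (K : Subfield (GaloisField p n)) (hK : Nat.card K = p ^ (n / b))
    (j : ℕ) (hj1 : 1 ≤ j) (hjb : j ≤ b) :
    (AddSubgroup.closure
        ((fun x => x * (ξ : GaloisField p n) ^ ((p ^ n - 1) / k * j)) ''
          Set.range fun m : ℕ => (ξ : GaloisField p n) ^ ((p ^ n - 1) / c * m)) :
        Set (GaloisField p n)) =
      {y | ∃ l ∈ K, y = l * (ξ : GaloisField p n) ^ ((p ^ n - 1) / k * j)} := by
  classical
  have hpp : p.Prime := Fact.out
  have hp : 1 < p := hpp.one_lt
  have hcardG : Nat.card (GaloisField p n) = p ^ n := GaloisField.card p n hn.ne'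
  have hbpos : 0 < b := lt_trans one_pos hb
  have hnb1 : 1 ≤ n / b := (Nat.one_le_div_iff hbpos).mpr (Nat.le_of_dvd hn hbn)
  have hq2 : 2 ≤ p ^ (n / b) := le_trans hp (Nat.le_self_pow (by omega) p)
  have hc0 : c ≠ 0 := by
    rintro rfl
    have := Nat.eq_zero_of_zero_dvd hc.1
    omega
  have hck : c ∣ k := ⟨b, by rw [hkbc, mul_comm]⟩
  have hcq : c ∣ p ^ n - 1 := hck.trans hk.1
  have hq1 : p ^ n - 1 ≠ 0 := by
    have : 1 < p ^ n := Nat.one_lt_pow hn.ne' hp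
    omega
  have hordξ : orderOf ξ = p ^ n - 1 := by
    rw [orderOf_eq_card_of_forall_mem_zpowers (fun x => hξ ▸ Subgroup.mem_top x),
      Nat.card_units, GaloisField.card p n hn.ne']
  set gv : GaloisField p n := (ξ : GaloisField p n) ^ ((p ^ n - 1) / c) with hgv
  have hordgv : orderOf gv = c := by
    have h1 : orderOf (ξ ^ ((p ^ n - 1) / c)) = c := by
      rw [orderOf_pow, hordξ, Nat.gcd_eq_right (Nat.div_dvd_of_dvd hcq),
        Nat.div_div_self hcq hq1]
    rw [hgv, ← Units.val_pow_eq_pow_val, orderOf_units, h1]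
  have hgv0 : gv ≠ 0 := by
    rw [hgv, ← Units.val_pow_eq_pow_val]; exact Units.ne_zero _
  have hKfix : (K : Set (GaloisField p n)) = {x | x ^ p ^ (n / b) = x} :=
    subfield_eq_fixed p (n / b) hp (by omega) K hK
  have hgvK : gv ∈ K := by
    rw [← SetLike.mem_coe, hKfix]
    show gv ^ p ^ (n / b) = gv
    have h1 : gv ^ c = 1 := by rw [← hordgv]; exact pow_orderOf_eq_one gv
    obtain ⟨e, he⟩ := hc.1
    have h2 : p ^ (n / b) = c * e + 1 := by omega
    rw [h2, pow_add, pow_mul, h1, one_pow, one_mul, pow_one]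
  have hmain : (AddSubgroup.closure (Set.range fun m : ℕ => gv ^ m) :
      Set (GaloisField p n)) = (K : Set (GaloisField p n)) :=
    closure_range_pow_eq_subfield hpp (by omega) hcardG K hK gv hgv0 hgvK hordgv hc.2
  have hS : (Set.range fun m : ℕ => (ξ : GaloisField p n) ^ ((p ^ n - 1) / c * m)) =
      Set.range fun m : ℕ => gv ^ m :=
    congrArg Set.range (funext fun m => pow_mul _ _ _)
  set t : GaloisField p n := (ξ : GaloisField p n) ^ ((p ^ n - 1) / k * j) with htdef
  have himg : ((fun x => x * t) ''
        (Set.range fun m : ℕ => (ξ : GaloisField p n) ^ ((p ^ n - 1) / c * m)))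
      = (AddMonoidHom.mulRight t) '' (Set.range fun m : ℕ => gv ^ m) := by
    rw [hS]; rfl
  rw [himg, ← AddMonoidHom.map_closure, AddSubgroup.coe_map, hmain]
  ext y
  simp only [Set.mem_image, Set.mem_setOf_eq, SetLike.mem_coe,
    AddMonoidHom.coe_mulRight]
  constructor
  · rintro ⟨l, hl, rfl⟩; exact ⟨l, hl, rfl⟩
  · rintro ⟨l, hl, rfl⟩; exact ⟨l, hl, rfl⟩
end

section
/- Let p be a prime, n a positive integer, and k a primitive divisor of p^n − 1 such that k is even if p is odd. Suppose k = b·c with b > 1, b dividing n, and c a primitive divisor of p^{n/b} − 1, and write d = (p^n − 1)/k. Let ξ be a generator of GF(p^n)^*, let C = ⟨ξ^{(p^n−1)/c}⟩ be the subgroup of GF(p^n)^* of order c, and for 1 ≤ i ≤ b let A_i be the additive subgroup of GF(p^n) generated by the coset C·ξ^{d·i}. Then the additive group of GF(p^n) is the internal direct sum of A₁, …, A_b; in particular every element of GF(p^n) is uniquely a sum a₁ + … + a_b with a_i ∈ A_i. -/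
section Aux
open Module Polynomial

variable {p n : ℕ} [Fact p.Prime]

/-- Lower bound on the rank of the subalgebra generated by an element whose
multiplicative order is a "primitive divisor up to m". -/
lemma aux_finrank_adjoin_ge (x : GaloisField p n) (hx : x ≠ 0) (m : ℕ)
    (hprim : ∀ a : ℕ, 1 ≤ a → a < m → ¬ orderOf x ∣ p ^ a - 1) :
    m ≤ Module.finrank (ZMod p) ↥(Algebra.adjoin (ZMod p) {x}) := by
  classical
  set E := Algebra.adjoin (ZMod p) {x} with hE
  haveI : Fintype ↥E := Fintype.ofFinite _
  letI : Field ↥E := Fintype.fieldOfDomain _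
  set a := Module.finrank (ZMod p) ↥E with ha
  have hcard : Fintype.card ↥E = p ^ a := by
    rw [card_eq_pow_finrank (K := ZMod p) (V := ↥E), ZMod.card]
  have hxE : x ∈ E := Algebra.self_mem_adjoin_singleton _ _
  have hxe : (⟨x, hxE⟩ : ↥E) ≠ 0 := by
    intro h
    exact hx (congrArg Subtype.val h)
  have hpow : (⟨x, hxE⟩ : ↥E) ^ (Fintype.card ↥E - 1) = 1 :=
    FiniteField.pow_card_sub_one_eq_one _ hxe
  have hpowF : x ^ (p ^ a - 1) = 1 := by
    have := congrArg Subtype.val hpow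
    rw [hcard] at this
    simpa using this
  have hdvd : orderOf x ∣ p ^ a - 1 := orderOf_dvd_of_pow_eq_one hpowF
  have ha1 : 1 ≤ a := by
    by_contra h
    have ha0 : a = 0 := by omega
    rw [ha0, pow_zero] at hcard
    haveI : Nontrivial ↥E := ⟨⟨0, 1, fun hz => zero_ne_one (congrArg Subtype.val hz)⟩⟩
    have h2 : 1 < Fintype.card ↥E := Fintype.one_lt_card
    omega
  by_contra h
  push_neg at h
  exact hprim a ha1 h hdvd

/-- Upper bound: if `x ^ (p ^ m) = x` then the subalgebra generated by `x`
has rank at most `m`. -/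
lemma aux_finrank_adjoin_le (x : GaloisField p n) (m : ℕ) (hm : 0 < m)
    (hx : x ^ p ^ m = x) :
    Module.finrank (ZMod p) ↥(Algebra.adjoin (ZMod p) {x}) ≤ m := by
  classical
  set E := Algebra.adjoin (ZMod p) {x} with hE
  haveI : Fintype ↥E := Fintype.ofFinite _
  set a := Module.finrank (ZMod p) ↥E with ha
  have hcard : Fintype.card ↥E = p ^ a := by
    rw [card_eq_pow_finrank (K := ZMod p) (V := ↥E), ZMod.card]
  have hp1 : 1 < p := (Fact.out : p.Prime).one_lt
  -- every element of E is fixed by the m-th Frobenius power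
  have hfix : ∀ y ∈ E, y ^ p ^ m = y := by
    intro y hy
    induction hy using Algebra.adjoin_induction with
    | mem z hz => rw [Set.mem_singleton_iff] at hz; rw [hz]; exact hx
    | algebraMap r =>
        rw [← map_pow, ZMod.pow_card_pow]
    | add u v hu hv ihu ihv => rw [add_pow_char_pow, ihu, ihv]
    | mul u v hu hv ihu ihv => rw [mul_pow, ihu, ihv]
  -- all elements of E are roots of X ^ p ^ m - X
  set P : Polynomial (GaloisField p n) := Polynomial.X ^ p ^ m - Polynomial.X with hP
  have hPne : P ≠ 0 := FiniteField.X_pow_card_pow_sub_X_ne_zero _ hm.ne' hp1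
  have hPdeg : P.natDegree = p ^ m := FiniteField.X_pow_card_pow_sub_X_natDegree_eq _ hm.ne' hp1
  have hroot : ∀ y ∈ E, y ∈ P.roots.toFinset := by
    intro y hy
    rw [Multiset.mem_toFinset, Polynomial.mem_roots hPne]
    simp only [P, Polynomial.IsRoot, Polynomial.eval_sub, Polynomial.eval_pow,
      Polynomial.eval_X, sub_eq_zero]
    exact hfix y hy
  have hcardle : Fintype.card ↥E ≤ p ^ m := by
    have hinj : Function.Injective
        (fun y : ↥E => (⟨(y : GaloisField p n), hroot _ y.2⟩ : ↥(P.roots.toFinset : Finset _))) := by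
      intro u v huv
      simp only [Subtype.mk.injEq] at huv
      exact Subtype.ext huv
    calc Fintype.card ↥E ≤ Fintype.card ↥(P.roots.toFinset : Finset _) :=
          Fintype.card_le_of_injective _ hinj
      _ = P.roots.toFinset.card := Fintype.card_coe _
      _ ≤ Multiset.card P.roots := P.roots.toFinset_card_le
      _ ≤ P.natDegree := P.card_roots'
      _ = p ^ m := hPdeg
  rw [hcard] at hcardle
  exact (Nat.pow_le_pow_iff_right hp1).mp hcardle

/-- rank bound for a finite sup of submodules -/
lemma aux_finrank_finset_sup_le {K V : Type*} [Field K] [AddCommGroup V] [Module K V]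
    [FiniteDimensional K V] {ι : Type*} [DecidableEq ι] (s : Finset ι) (M : ι → Submodule K V) :
    Module.finrank K ↥(s.sup M) ≤ ∑ i ∈ s, Module.finrank K ↥(M i) := by
  classical
  induction s using Finset.induction_on with
  | empty => simp
  | insert _ _ hnotmem ih =>
      rename_i i s
      rw [Finset.sup_insert, Finset.sum_insert hnotmem]
      calc Module.finrank K ↥(M i ⊔ s.sup M)
          ≤ Module.finrank K ↥(M i) + Module.finrank K ↥(s.sup M) :=
            Submodule.finrank_add_le_finrank_add_finrank _ _
        _ ≤ _ := by omega

lemma aux_adjoin_eq_top (hn : 0 < n) (x : GaloisField p n) (hx : x ≠ 0)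
    (hprim : ∀ a : ℕ, 1 ≤ a → a < n → ¬ orderOf x ∣ p ^ a - 1) :
    Algebra.adjoin (ZMod p) {x} = ⊤ := by
  have h1 := aux_finrank_adjoin_ge x hx n hprim
  rw [← Algebra.toSubmodule_eq_top]
  apply Submodule.eq_top_of_finrank_eq
  have h2 : Module.finrank (ZMod p)
      ↥(Subalgebra.toSubmodule (Algebra.adjoin (ZMod p) {x})) =
      Module.finrank (ZMod p) ↥(Algebra.adjoin (ZMod p) {x}) :=
    Subalgebra.finrank_toSubmodule _
  have h3 := Submodule.finrank_le (Subalgebra.toSubmodule (Algebra.adjoin (ZMod p) {x}))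
  rw [GaloisField.finrank p hn.ne'] at h3 ⊢
  omega

end Aux

set_option maxHeartbeats 2000000 in
set_option synthInstance.maxHeartbeats 200000 in
/-- With `k = b * c` a primitive divisor of `p^n - 1` (even if `p`
is odd), `b > 1`, `b ∣ n`, `c` a primitive divisor of `p^(n/b) - 1`,
`d = (p^n - 1)/k`, `ξ` a generator of `GF(p^n)ˣ`, `C = ⟨ξ^((p^n-1)/c)⟩`, and
`A_i` the additive subgroup generated by the coset `C·ξ^(d·i)` for
`1 ≤ i ≤ b`, the additive group of `GF(p^n)` is the internal direct sum of
`A₁, …, A_b`: every element is uniquely a sum `a₁ + … + a_b` with `a_i ∈ A_i`. -/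
theorem gpaley_internal_direct_sum (p n k b c : ℕ) [Fact p.Prime]
    (hn : 0 < n) (hk : IsPrimitiveDivisor p n k) (heven : Odd p → Even k)
    (hkbc : k = b * c) (hb : 1 < b) (hbn : b ∣ n)
    (hc : IsPrimitiveDivisor p (n / b) c)
    (ξ : (GaloisField p n)ˣ) (hξ : Subgroup.zpowers ξ = ⊤)
    (A : Fin b → AddSubgroup (GaloisField p n))
    (hA : ∀ i : Fin b, A i = AddSubgroup.closure
        ((fun x => x * (ξ : GaloisField p n) ^ ((p ^ n - 1) / k * (i.val + 1))) ''
          Set.range fun m : ℕ => (ξ : GaloisField p n) ^ ((p ^ n - 1) / c * m))) :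
    ∀ x : GaloisField p n,
      ∃! f : Fin b → GaloisField p n, (∀ i, f i ∈ A i) ∧ ∑ i, f i = x := by
  classical
  have hp1 : 1 < p := (Fact.out : p.Prime).one_lt
  have hpn : 1 < p ^ n := Nat.one_lt_pow hn.ne' hp1
  set m := n / b with hmdef
  have hmb : m * b = n := Nat.div_mul_cancel hbn
  have hm0 : 0 < m := by
    rcases Nat.eq_zero_or_pos m with h | h
    · rw [h, zero_mul] at hmb; omega
    · exact h
  have hpm : 1 < p ^ m := Nat.one_lt_pow hm0.ne' hp1
  have hpmn : p ^ m - 1 ∣ p ^ n - 1 := by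
    have h := Nat.sub_dvd_pow_sub_pow (p ^ m) 1 b
    rwa [one_pow, ← pow_mul, hmb] at h
  have hk0 : k ≠ 0 := by
    rintro rfl
    have := Nat.eq_zero_of_zero_dvd hk.1
    omega
  have hc0 : c ≠ 0 := by
    rintro rfl
    have := Nat.eq_zero_of_zero_dvd hc.1
    omega
  have hcn : c ∣ p ^ n - 1 := dvd_trans hc.1 hpmn
  -- order computations
  haveI : Fintype (GaloisField p n) := Fintype.ofFinite _
  have hcardF : Fintype.card (GaloisField p n) = p ^ n := by
    have := GaloisField.card p n hn.ne'
    rwa [Nat.card_eq_fintype_card] at this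
  have hξord : orderOf ((ξ : GaloisField p n)) = p ^ n - 1 := by
    rw [orderOf_units]
    rw [orderOf_eq_card_of_forall_mem_zpowers (fun u => hξ ▸ Subgroup.mem_top u)]
    rw [Nat.card_eq_fintype_card, Fintype.card_units, hcardF]
  set d := (p ^ n - 1) / k with hd
  set e := (p ^ n - 1) / c with he
  have hdk : d * k = p ^ n - 1 := Nat.div_mul_cancel hk.1
  have hec : e * c = p ^ n - 1 := Nat.div_mul_cancel hcn
  have hd0 : d ≠ 0 := by intro h0; rw [h0, zero_mul] at hdk; omega
  have he0 : e ≠ 0 := by intro h0; rw [h0, zero_mul] at hec; omega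
  set α := (ξ : GaloisField p n) ^ d with hα
  set ζ := (ξ : GaloisField p n) ^ e with hζ
  have hαne : α ≠ 0 := pow_ne_zero _ (Units.ne_zero ξ)
  have hζne : ζ ≠ 0 := pow_ne_zero _ (Units.ne_zero ξ)
  have hαord : orderOf α = k := by
    rw [hα, orderOf_pow' _ hd0, hξord, Nat.gcd_eq_right ⟨k, hdk.symm⟩, ← hdk,
      Nat.mul_div_cancel_left _ (Nat.pos_of_ne_zero hd0)]
  have hζord : orderOf ζ = c := by
    rw [hζ, orderOf_pow' _ he0, hξord, Nat.gcd_eq_right ⟨c, hec.symm⟩, ← hec,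
      Nat.mul_div_cancel_left _ (Nat.pos_of_ne_zero he0)]
  -- the subalgebra W = F_p(ζ)
  set W := Algebra.adjoin (ZMod p) {ζ} with hW
  have hζfix : ζ ^ p ^ m = ζ := by
    have h1 : ζ ^ (p ^ m - 1) = 1 := by
      apply orderOf_dvd_iff_pow_eq_one.mp
      rw [hζord]
      exact hc.1
    calc ζ ^ p ^ m = ζ ^ (p ^ m - 1) * ζ := by
          rw [← pow_succ]
          congr 1
          omega
      _ = ζ := by rw [h1, one_mul]
  have hWle : Module.finrank (ZMod p) ↥W ≤ m := aux_finrank_adjoin_le ζ m hm0 hζfix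
  have hWge : m ≤ Module.finrank (ZMod p) ↥W :=
    aux_finrank_adjoin_ge ζ hζne m (by rw [hζord]; exact hc.2)
  have hWrank : Module.finrank (ZMod p) ↥W = m := le_antisymm hWle hWge
  have hEtop : Algebra.adjoin (ZMod p) {α} = ⊤ :=
    aux_adjoin_eq_top hn α hαne (by rw [hαord]; exact hk.2)
  -- the additive closure of the powers of ζ is W
  set CS := AddSubgroup.closure (Set.range fun j : ℕ => ζ ^ j) with hCS
  have hmem1 : (1 : GaloisField p n) ∈ CS := AddSubgroup.subset_closure ⟨0, pow_zero ζ⟩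
  have claim1 : ∀ s : ℕ, ∀ y ∈ CS, y * ζ ^ s ∈ CS := by
    intro s y hy
    induction hy using AddSubgroup.closure_induction with
    | mem z hz =>
        obtain ⟨j, rfl⟩ := hz
        exact AddSubgroup.subset_closure ⟨j + s, by simp [pow_add]⟩
    | zero => rw [zero_mul]; exact zero_mem _
    | add u v hu hv ihu ihv => rw [add_mul]; exact add_mem ihu ihv
    | neg u hu ihu => rw [neg_mul]; exact neg_mem ihu
  have claim2 : ∀ y ∈ CS, ∀ z ∈ CS, y * z ∈ CS := by
    intro y hy z hz
    induction hz using AddSubgroup.closure_induction with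
    | mem w hw =>
        obtain ⟨j, rfl⟩ := hw
        exact claim1 j y hy
    | zero => rw [mul_zero]; exact zero_mem _
    | add u v hu hv ihu ihv => rw [mul_add]; exact add_mem ihu ihv
    | neg u hu ihu => rw [mul_neg]; exact neg_mem ihu
  have hCSW : ∀ y : GaloisField p n, y ∈ CS ↔ y ∈ W := by
    intro y
    constructor
    · intro hy
      induction hy using AddSubgroup.closure_induction with
      | mem z hz =>
          obtain ⟨j, rfl⟩ := hz
          exact pow_mem (Algebra.self_mem_adjoin_singleton _ _) j
      | zero => exact zero_mem _
      | add u v hu hv ihu ihv => exact add_mem ihu ihv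
      | neg u hu ihu => exact neg_mem ihu
    · intro hy
      induction hy using Algebra.adjoin_induction with
      | mem z hz =>
          rw [Set.mem_singleton_iff] at hz
          exact AddSubgroup.subset_closure ⟨1, by simp [hz]⟩
      | algebraMap r =>
          have h2 : algebraMap (ZMod p) (GaloisField p n) r = r.val • (1 : GaloisField p n) := by
            have h3 : ((r.val : ℕ) : ZMod p) = r := ZMod.natCast_rightInverse r
            rw [nsmul_eq_mul, mul_one]
            conv_lhs => rw [← h3]
            exact map_natCast (algebraMap (ZMod p) (GaloisField p n)) _
          rw [h2]
          exact AddSubgroup.nsmul_mem CS hmem1 r.val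
      | add u v hu hv ihu ihv => exact add_mem ihu ihv
      | mul u v hu hv ihu ihv => exact claim2 u ihu v ihv
  -- description of A i
  have hAmem : ∀ (i : Fin b) (y : GaloisField p n),
      y ∈ A i ↔ ∃ w ∈ W, w * α ^ (i.val + 1) = y := by
    intro i y
    rw [hA i]
    have hrange : (Set.range fun j : ℕ => (ξ : GaloisField p n) ^ (e * j))
        = Set.range fun j : ℕ => ζ ^ j := by
      ext z
      constructor
      · rintro ⟨j, rfl⟩; exact ⟨j, by simp [hζ, pow_mul]⟩
      · rintro ⟨j, rfl⟩; exact ⟨j, by simp [hζ, pow_mul]⟩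
    have hfun : (fun x => x * (ξ : GaloisField p n) ^ (d * (i.val + 1)))
        = ⇑(AddMonoidHom.mulRight (α ^ (i.val + 1))) := by
      funext z
      rw [AddMonoidHom.coe_mulRight, hα, ← pow_mul]
    rw [hrange, hfun, ← AddMonoidHom.map_closure, ← hCS]
    simp only [AddSubgroup.mem_map, AddMonoidHom.coe_mulRight]
    constructor
    · rintro ⟨w, hw, rfl⟩; exact ⟨w, (hCSW w).mp hw, rfl⟩
    · rintro ⟨w, hw, rfl⟩; exact ⟨w, (hCSW w).mpr hw, rfl⟩
  -- inverses inside W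
  haveI : Fintype ↥W := Fintype.ofFinite _
  have hinv : ∀ u, u ∈ W → u ≠ 0 → ∃ v ∈ W, u * v = 1 := by
    intro u hu hune
    have hinjW : Function.Injective (fun z : ↥W => (⟨u * z, mul_mem hu z.2⟩ : ↥W)) := by
      intro z1 z2 h12
      have h13 : u * (z1 : GaloisField p n) = u * (z2 : GaloisField p n) := Subtype.ext_iff.mp h12
      exact Subtype.ext (mul_left_cancel₀ hune h13)
    obtain ⟨v, hv⟩ := Finite.surjective_of_injective hinjW ⟨1, one_mem W⟩
    exact ⟨v, v.2, Subtype.ext_iff.mp hv⟩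
  -- linear independence of the powers of α over W
  have hindep : ∀ w : Fin b → GaloisField p n, (∀ i, w i ∈ W) →
      ∑ i, w i * α ^ (i : ℕ) = 0 → ∀ i, w i = 0 := by
    intro w hw hsum
    by_contra hcon
    push_neg at hcon
    obtain ⟨i0, hi0⟩ := hcon
    set s : Finset (Fin b) := Finset.univ.filter (fun i => w i ≠ 0) with hs
    have hsne : s.Nonempty := ⟨i0, by simp [hs, hi0]⟩
    set j := s.max' hsne with hj
    have hwj : w j ≠ 0 := by have := s.max'_mem hsne; simpa [hs] using this
    have hmax : ∀ i : Fin b, w i ≠ 0 → (i : ℕ) ≤ (j : ℕ) :=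
      fun i hi => s.le_max' i (by simp [hs, hi])
    have hrel : w j * α ^ (j : ℕ) = - ∑ i ∈ Finset.univ.erase j, w i * α ^ (i : ℕ) := by
      have h5 := hsum
      rw [← Finset.add_sum_erase _ _ (Finset.mem_univ j)] at h5
      exact eq_neg_of_add_eq_zero_left h5
    obtain ⟨y, hyW, hy1⟩ := hinv (w j) (hw j) hwj
    have hαj : α ^ (j : ℕ) = ∑ i ∈ Finset.univ.erase j, -(y * w i) * α ^ (i : ℕ) := by
      have h4 : y * (w j * α ^ (j : ℕ)) = α ^ (j : ℕ) := by
        rw [← mul_assoc, mul_comm y (w j), hy1, one_mul]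
      rw [← h4, hrel, mul_neg, Finset.mul_sum, ← Finset.sum_neg_distrib]
      exact Finset.sum_congr rfl (fun i _ => by ring)
    set M : ℕ → Submodule (ZMod p) (GaloisField p n) :=
      fun t => (Subalgebra.toSubmodule W).map (LinearMap.mulRight (ZMod p) (α ^ t)) with hM
    set U : Submodule (ZMod p) (GaloisField p n) := (Finset.range (j : ℕ)).sup M with hU
    have hMU : ∀ t, t < (j : ℕ) → M t ≤ U := fun t ht => Finset.le_sup (Finset.mem_range.mpr ht)
    have hmemM : ∀ (t : ℕ) (x : GaloisField p n), x ∈ W → x * α ^ t ∈ M t := by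
      intro t x hx
      exact ⟨x, by simpa using hx, rfl⟩
    have key : ∀ t : ℕ, ∀ x ∈ W, x * α ^ t ∈ U := by
      intro t
      induction t using Nat.strong_induction_on with
      | _ t ih =>
        intro x hx
        rcases lt_or_ge t (j : ℕ) with hlt | hge
        · exact hMU t hlt (hmemM t x hx)
        · have hts : t - (j : ℕ) + (j : ℕ) = t := Nat.sub_add_cancel hge
          have hxt : x * α ^ t = ∑ i ∈ Finset.univ.erase j,
              (x * -(y * w i)) * α ^ (t - (j : ℕ) + (i : ℕ)) := by
            have e1 : x * α ^ t = (x * α ^ (t - (j : ℕ))) * α ^ (j : ℕ) := by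
              rw [mul_assoc, ← pow_add, hts]
            rw [e1, hαj, Finset.mul_sum]
            refine Finset.sum_congr rfl (fun i _ => ?_)
            rw [pow_add]
            ring
          rw [hxt]
          apply Submodule.sum_mem
          intro i hi
          rcases eq_or_ne (w i) 0 with h0 | h0
          · rw [h0, mul_zero, neg_zero, mul_zero, zero_mul]
            exact zero_mem _
          · have hij : (i : ℕ) < (j : ℕ) := by
              have h1 := hmax i h0
              have h2 : i ≠ j := (Finset.mem_erase.mp hi).1
              exact lt_of_le_of_ne h1 (fun hh => h2 (Fin.ext hh))
            have hlt2 : t - (j : ℕ) + (i : ℕ) < t := by omega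
            exact ih _ hlt2 _ (mul_mem hx (neg_mem (mul_mem hyW (hw i))))
    have htop : (⊤ : Submodule (ZMod p) (GaloisField p n)) ≤ U := by
      rw [← Algebra.toSubmodule_eq_top.mpr hEtop, Algebra.adjoin_eq_span]
      apply Submodule.span_le.mpr
      intro z hz
      rw [SetLike.mem_coe, Submonoid.mem_closure_singleton] at hz
      obtain ⟨t, rfl⟩ := hz
      simpa using key t 1 (one_mem W)
    have hrankU : Module.finrank (ZMod p) ↥U = n := by
      have hUeq : U = ⊤ := top_unique htop
      rw [hUeq, finrank_top, GaloisField.finrank p hn.ne']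
    have hrankM : ∀ t : ℕ, Module.finrank (ZMod p) ↥(M t) ≤ m := by
      intro t
      calc Module.finrank (ZMod p) ↥(M t)
          ≤ Module.finrank (ZMod p) ↥(Subalgebra.toSubmodule W) :=
            Submodule.finrank_map_le _ _
        _ = m := by rw [Subalgebra.finrank_toSubmodule, hWrank]
    have hranklt : Module.finrank (ZMod p) ↥U ≤ (j : ℕ) * m := by
      calc Module.finrank (ZMod p) ↥U
          ≤ ∑ t ∈ Finset.range (j : ℕ), Module.finrank (ZMod p) ↥(M t) :=
            aux_finrank_finset_sup_le _ _
        _ ≤ ∑ _t ∈ Finset.range (j : ℕ), m := Finset.sum_le_sum (fun t _ => hrankM t)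
        _ = (j : ℕ) * m := by rw [Finset.sum_const, Finset.card_range, smul_eq_mul]
    have hjb : (j : ℕ) * m < n := by
      calc (j : ℕ) * m < b * m := by
            exact (Nat.mul_lt_mul_right hm0).mpr j.isLt
        _ = n := by rw [mul_comm]; exact hmb
    omega
  -- shifted independence
  have hindep1 : ∀ w : Fin b → GaloisField p n, (∀ i, w i ∈ W) →
      ∑ i, w i * α ^ ((i : ℕ) + 1) = 0 → ∀ i, w i = 0 := by
    intro w hw hsum
    apply hindep w hw
    have h1 : (∑ i, w i * α ^ (i : ℕ)) * α = 0 := by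
      rw [Finset.sum_mul, ← hsum]
      exact Finset.sum_congr rfl (fun i _ => by rw [mul_assoc, ← pow_succ])
    exact (mul_eq_zero.mp h1).resolve_right hαne
  have hcardW : Fintype.card ↥W = p ^ m := by
    rw [Module.card_eq_pow_finrank (K := ZMod p) (V := ↥W), ZMod.card, hWrank]
  set Φ : (Fin b → ↥W) → GaloisField p n :=
    fun g => ∑ i, ((g i : GaloisField p n) * α ^ ((i : ℕ) + 1)) with hΦ
  have hΦinj : Function.Injective Φ := by
    intro g1 g2 hg
    have hsum0 : ∑ i, (((g1 i : GaloisField p n) - (g2 i : GaloisField p n))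
        * α ^ ((i : ℕ) + 1)) = 0 := by
      have : ∑ i, (((g1 i : GaloisField p n) * α ^ ((i : ℕ) + 1))
          - ((g2 i : GaloisField p n) * α ^ ((i : ℕ) + 1))) = 0 := by
        rw [Finset.sum_sub_distrib]
        rw [show (∑ i, ((g1 i : GaloisField p n) * α ^ ((i : ℕ) + 1))) = Φ g1 from rfl]
        rw [show (∑ i, ((g2 i : GaloisField p n) * α ^ ((i : ℕ) + 1))) = Φ g2 from rfl]
        rw [hg, sub_self]
      rw [← this]
      exact Finset.sum_congr rfl (fun i _ => by rw [sub_mul])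
    have hz := hindep1 _ (fun i => sub_mem (g1 i).2 (g2 i).2) hsum0
    funext i
    exact Subtype.ext (sub_eq_zero.mp (hz i))
  have hΦbij : Function.Bijective Φ := by
    refine (Fintype.bijective_iff_injective_and_card Φ).mpr ⟨hΦinj, ?_⟩
    rw [Fintype.card_fun, Fintype.card_fin, hcardW, hcardF, ← pow_mul, hmb]
  intro x
  obtain ⟨g, hg⟩ := hΦbij.2 x
  refine ⟨fun i => (g i : GaloisField p n) * α ^ ((i : ℕ) + 1), ⟨?_, hg⟩, ?_⟩
  · intro i
    exact (hAmem i _).mpr ⟨g i, (g i).2, rfl⟩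
  · rintro f ⟨hfA, hfsum⟩
    choose wv hwvW hwveq using fun i => (hAmem i (f i)).mp (hfA i)
    have hzero : ∀ i, wv i - (g i : GaloisField p n) = 0 := by
      apply hindep1
      · intro i
        exact sub_mem (hwvW i) (g i).2
      · have h6 : ∑ i, wv i * α ^ ((i : ℕ) + 1) = x := by
          rw [← hfsum]
          exact Finset.sum_congr rfl (fun i _ => hwveq i)
        have h7 : ∑ i, ((g i : GaloisField p n) * α ^ ((i : ℕ) + 1)) = x := hg
        calc ∑ i, (wv i - (g i : GaloisField p n)) * α ^ ((i : ℕ) + 1)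
            = ∑ i, (wv i * α ^ ((i : ℕ) + 1)
                - (g i : GaloisField p n) * α ^ ((i : ℕ) + 1)) :=
              Finset.sum_congr rfl (fun i _ => by rw [sub_mul])
          _ = 0 := by rw [Finset.sum_sub_distrib, h6, h7, sub_self]
    funext i
    rw [← hwveq i, sub_eq_zero.mp (hzero i)]
end

section
/- Let p be a prime, n a positive integer, and b a divisor of n with b > 1, and set k = b·(p^{n/b} − 1). If k is a primitive divisor of p^n − 1 and k is even if p is odd, then GPaley(p^n, k) is isomorphic to the b-fold Cartesian power □^b K_{p^{n/b}} of the complete graph on p^{n/b} vertices (a Hamming graph). -/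
open Polynomial IntermediateField

lemma exists_pow_eq_iff {K : Type*} [Field K] [Fintype K] {d k : ℕ} (hk : k ≠ 0)
    (hdk : d * k = Fintype.card K - 1) (x : Kˣ) :
    (∃ z : Kˣ, z ^ d = x) ↔ x ^ k = 1 := by
  classical
  constructor
  · rintro ⟨z, rfl⟩
    rw [← pow_mul, hdk, ← Fintype.card_units, pow_card_eq_one]
  · intro hx
    obtain ⟨g, hg⟩ := IsCyclic.exists_generator (α := Kˣ)
    have horder : orderOf g = d * k := by
      rw [orderOf_eq_card_of_forall_mem_zpowers hg, Nat.card_eq_fintype_card,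
        Fintype.card_units, hdk]
    obtain ⟨j, rfl⟩ := hg x
    rw [← zpow_natCast, ← zpow_mul, ← orderOf_dvd_iff_zpow_eq_one, horder] at hx
    have hd : (d : ℤ) ∣ j := by
      rw [Nat.cast_mul] at hx
      exact (mul_dvd_mul_iff_right (by exact_mod_cast hk : (k : ℤ) ≠ 0)).mp
        hx
    obtain ⟨s, rfl⟩ := hd
    refine ⟨g ^ s, ?_⟩
    rw [← zpow_natCast, ← zpow_mul, mul_comm]


/-- The subfield of `x` with `x ^ p ^ m = x`. -/
noncomputable def fixedSub (K : Type*) [Field K] (p m : ℕ) [Fact p.Prime] [CharP K p] :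
    Subfield K :=
  (RingHom.eqLocus ((frobenius K p) ^ m) (RingHom.id K)).toSubfield (by
    intro x hx
    have hx' : ((frobenius K p) ^ m) x = x := hx
    show ((frobenius K p) ^ m) x⁻¹ = x⁻¹
    rw [map_inv₀, hx'])

lemma mem_fixedSub {K : Type*} [Field K] {p m : ℕ} [Fact p.Prime] [CharP K p] (x : K) :
    x ∈ fixedSub K p m ↔ x ^ p ^ m = x := by
  have : ((frobenius K p) ^ m) x = x ^ p ^ m := by
    rw [RingHom.coe_pow] at *
    exact iterate_frobenius p m x
  exact ⟨fun h => by rw [← this]; exact h, fun h => by show _ = _; rw [this, h]; rfl⟩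

lemma card_fixedSub {K : Type*} [Field K] [Fintype K] {p m : ℕ} [Fact p.Prime] [CharP K p]
    (hm : m ≠ 0) (hdvd : p ^ m - 1 ∣ Fintype.card K - 1) :
    Nat.card (fixedSub K p m) = p ^ m := by
  classical
  have hp1 : 1 < p := (Fact.out : p.Prime).one_lt
  have hq1 : 1 < p ^ m := Nat.one_lt_pow hm hp1
  have hK1 : 1 < Fintype.card K := Fintype.one_lt_card
  set g : K[X] := X ^ p ^ m - X with hg
  set f : K[X] := X ^ Fintype.card K - X with hf
  have hf0 : f ≠ 0 := FiniteField.X_pow_card_sub_X_ne_zero K hK1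
  have hg0 : g ≠ 0 := FiniteField.X_pow_card_sub_X_ne_zero K hq1
  -- divisibility g ∣ f
  have hdvd' : g ∣ f := by
    obtain ⟨c, hc⟩ := hdvd
    have h1 : (X : K[X]) ^ (p ^ m - 1) - 1 ∣ X ^ (Fintype.card K - 1) - 1 := by
      rw [hc, pow_mul]
      simpa using sub_dvd_pow_sub_pow ((X : K[X]) ^ (p ^ m - 1)) 1 c
    obtain ⟨e, he⟩ := h1
    refine ⟨e, ?_⟩
    have h2 : (X : K[X]) * (X ^ (p ^ m - 1) - 1) = g := by
      rw [hg, mul_sub, mul_one, ← pow_succ', Nat.sub_add_cancel hq1.le]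
    have h3 : (X : K[X]) * (X ^ (Fintype.card K - 1) - 1) = f := by
      rw [hf, mul_sub, mul_one, ← pow_succ', Nat.sub_add_cancel hK1.le]
    rw [← h2, ← h3, he, mul_assoc]
  -- f splits with simple roots
  have hfroots : f.roots = Finset.univ.val := FiniteField.roots_X_pow_card_sub_X K
  have hfsplits : Splits f := by
    rw [splits_iff_card_roots, hfroots, FiniteField.X_pow_card_sub_X_natDegree_eq K hK1]
    exact Finset.card_univ
  have hgsplits : Splits g := hfsplits.of_dvd hf0 hdvd'
  have hgcard : Multiset.card g.roots = p ^ m := by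
    rw [← FiniteField.X_pow_card_sub_X_natDegree_eq K hq1]
    exact splits_iff_card_roots.mp hgsplits
  have hnodup : g.roots.Nodup :=
    Multiset.nodup_of_le (roots.le_of_dvd hf0 hdvd') (by rw [hfroots]; exact Finset.univ.nodup)
  have hsetsub : ∀ x : K, x ∈ fixedSub K p m ↔ x ∈ g.roots.toFinset := by
    intro x
    rw [mem_fixedSub, Multiset.mem_toFinset, mem_roots hg0]
    simp [hg, IsRoot, sub_eq_zero]
  calc Nat.card (fixedSub K p m) = Nat.card {x : K // x ∈ g.roots.toFinset} :=
        Nat.card_congr (Equiv.subtypeEquivRight hsetsub)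
    _ = g.roots.toFinset.card := by rw [Nat.card_eq_fintype_card, Fintype.card_coe]
    _ = Multiset.card g.roots := Multiset.toFinset_card_eq_card_iff_nodup.mpr hnodup
    _ = p ^ m := hgcard


set_option synthInstance.maxHeartbeats 1000000 in
set_option maxHeartbeats 1000000 in
lemma minpoly_natDegree_dvd_and_pow_eq_one {K : Type*} [Field K] [Finite K] (F : Subfield K)
    (x : K) (hx : x ≠ 0) :
    (minpoly F x).natDegree ∣ Module.finrank F K ∧
      x ^ (Nat.card F ^ (minpoly F x).natDegree - 1) = 1 := by
  haveI : Module.Finite F K := Module.Finite.of_finite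
  have hint : IsIntegral F x := IsIntegral.of_finite F x
  have hrankE : Module.finrank F F⟮x⟯ = (minpoly F x).natDegree :=
    IntermediateField.adjoin.finrank hint
  constructor
  · have h2 := Module.finrank_mul_finrank F F⟮x⟯ K
    rw [hrankE] at h2
    exact ⟨_, h2.symm⟩
  · haveI : Fintype F⟮x⟯ := Fintype.ofFinite _
    haveI : Fintype F := Fintype.ofFinite _
    have hcardE : Fintype.card F⟮x⟯ = Fintype.card F ^ (minpoly F x).natDegree := by
      rw [← hrankE]
      exact Module.card_eq_pow_finrank
    have hxE : x ∈ F⟮x⟯ := IntermediateField.mem_adjoin_simple_self F x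
    have h1 : (⟨x, hxE⟩ : F⟮x⟯) ^ (Fintype.card F⟮x⟯ - 1) = 1 :=
      FiniteField.pow_card_sub_one_eq_one _
        (fun h => hx (by simpa using congrArg Subtype.val h))
    have h2 := congrArg Subtype.val h1
    rw [Nat.card_eq_fintype_card, ← hcardE]
    simpa using h2

set_option maxHeartbeats 1600000 in
set_option synthInstance.maxHeartbeats 1000000 in
/-- For `b ∣ n` with `b > 1` and `k = b·(p^(n/b) - 1)` a primitive
divisor of `p^n - 1` (even if `p` is odd), `GPaley(p^n, k)` is isomorphic to
the `b`-fold Cartesian power of the complete graph on `p^(n/b)` vertices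
(a Hamming graph). -/
theorem gpaley_iso_hamming (p n b : ℕ) [Fact p.Prime] (hn : 0 < n)
    (hb : 1 < b) (hbn : b ∣ n)
    (hk : IsPrimitiveDivisor p n (b * (p ^ (n / b) - 1)))
    (heven : Odd p → Even (b * (p ^ (n / b) - 1))) :
    Nonempty (gpaley p n (b * (p ^ (n / b) - 1)) ≃g
      boxPow b (⊤ : SimpleGraph (Fin (p ^ (n / b))))) := by
  classical
  set K := GaloisField p n with hK
  haveI : Fintype K := Fintype.ofFinite K
  set m := n / b with hm
  set q := p ^ m with hq
  set k := b * (q - 1) with hkdef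
  have hp1 : 1 < p := (Fact.out : p.Prime).one_lt
  have hbpos : 0 < b := by omega
  have hmpos : 0 < m := Nat.div_pos (Nat.le_of_dvd hn hbn) hbpos
  have hnmb : n = m * b := by rw [hm, Nat.div_mul_cancel hbn]
  have hq1 : 1 < q := Nat.one_lt_pow hmpos.ne' hp1
  have hcardK : Fintype.card K = p ^ n := by
    rw [← Nat.card_eq_fintype_card]; exact GaloisField.card p n hn.ne'
  have hcardKq : Fintype.card K = q ^ b := by rw [hcardK, hnmb, pow_mul]
  have hpn1 : 1 < p ^ n := Nat.one_lt_pow hn.ne' hp1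
  set N := p ^ n - 1 with hN
  have hNpos : 0 < N := by omega
  have hkpos : 0 < k := Nat.mul_pos hbpos (by omega)
  have hkdvd : k ∣ N := hk.1
  set d := N / k with hd
  have hdk : d * k = N := Nat.div_mul_cancel hkdvd
  have hdpos : 0 < d := by
    rcases Nat.eq_zero_or_pos d with h | h
    · rw [h, zero_mul] at hdk; omega
    · exact h
  have hcardU : Fintype.card Kˣ = N := by rw [Fintype.card_units, hcardK]
  -- the subfield F of cardinality q
  set F := fixedSub K p m with hF
  haveI : Fintype F := Fintype.ofFinite F
  have hqN : q - 1 ∣ N := by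
    have h := Nat.sub_dvd_pow_sub_pow q 1 b
    rw [one_pow] at h
    rw [hN, hnmb, pow_mul]
    exact h
  have hcardF : Fintype.card F = q := by
    rw [← Nat.card_eq_fintype_card]
    exact card_fixedSub hmpos.ne' (by rw [hcardK]; exact hqN)
  haveI : Module.Finite F K := Module.Finite.of_finite
  have hfinrank : Module.finrank F K = b := by
    have h := Module.card_eq_pow_finrank (K := F) (V := K)
    rw [hcardF, hcardKq] at h
    exact (Nat.pow_right_injective hq1 h).symm
  -- the generator γ of the subgroup of k-th roots of unity
  obtain ⟨g0, hg0⟩ := IsCyclic.exists_generator (α := Kˣ)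
  set γ : Kˣ := g0 ^ d with hγ
  clear_value γ
  have horderg0 : orderOf g0 = N := by
    rw [orderOf_eq_card_of_forall_mem_zpowers hg0, Nat.card_eq_fintype_card, hcardU]
  have horderγ : orderOf γ = k := by
    rw [hγ, orderOf_pow, horderg0, ← hdk]
    rw [Nat.gcd_comm, Nat.gcd_eq_left ⟨k, rfl⟩, Nat.mul_div_cancel_left k hdpos]
  have hγk1 : γ ^ k = 1 := by rw [← horderγ, pow_orderOf_eq_one]
  -- membership in F for units
  have hmemF : ∀ c : Kˣ, (c : K) ∈ F ↔ c ^ (q - 1) = 1 := by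
    intro c
    rw [mem_fixedSub]
    constructor
    · intro h
      have h1 : (c : K) ^ (q - 1) * (c : K) = (c : K) := by
        rw [← pow_succ, Nat.sub_add_cancel hq1.le, h]
      have h2 : (c : K) ^ (q - 1) = 1 := by
        exact (mul_eq_right₀ (Units.ne_zero c)).mp h1
      exact Units.ext (by simpa using h2)
    · intro h
      have h2 : (c : K) ^ (q - 1) = 1 := by
        have := congrArg (Units.val) h
        simpa using this
      calc (c : K) ^ q = (c : K) ^ (q - 1) * (c : K) := by
            rw [← pow_succ, Nat.sub_add_cancel hq1.le]
        _ = (c : K) := by rw [h2, one_mul]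
  -- the coset characterisation of k-th roots of unity
  have hC' : ∀ (i : ℕ) (c : Kˣ), (c : K) ∈ F → (γ ^ i * c) ^ k = 1 := by
    intro i c hc
    rw [mul_pow, ← pow_mul, mul_comm i k, pow_mul, hγk1, one_pow, one_mul, hkdef,
      mul_comm b (q - 1), pow_mul, (hmemF c).mp hc, one_pow]
  have hC : ∀ x : Kˣ, x ^ k = 1 → ∃ (i : Fin b) (c : Kˣ), (c : K) ∈ F ∧ x = γ ^ (i : ℕ) * c := by
    intro x hx
    -- x is a power of γ
    obtain ⟨j, hj⟩ := hg0 x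
    dsimp only at hj
    have hj' : g0 ^ (j * k) = 1 := by rw [zpow_mul, hj, zpow_natCast, hx]
    have hdvdj : (d : ℤ) ∣ j := by
      rw [← orderOf_dvd_iff_zpow_eq_one, horderg0, ← hdk, Nat.cast_mul] at hj'
      have hk0 : (k : ℤ) ≠ 0 := by exact_mod_cast hkpos.ne'
      exact (mul_dvd_mul_iff_right hk0).mp hj'
    obtain ⟨s, rfl⟩ := hdvdj
    have hxγ : x ∈ Subgroup.zpowers γ :=
      ⟨s, by show γ ^ s = x; rw [hγ]; rw [← zpow_natCast g0 d, ← zpow_mul]; exact hj⟩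
    obtain ⟨j', hj'2⟩ := (mem_powers_iff_mem_zpowers).mpr hxγ
    dsimp only at hj'2
    have hγb : (γ ^ b) ^ (q - 1) = 1 := by rw [← pow_mul, ← hkdef, hγk1]
    refine ⟨⟨j' % b, Nat.mod_lt _ hbpos⟩, (γ ^ b) ^ (j' / b), ?_, ?_⟩
    · rw [hmemF, ← pow_mul, mul_comm (j' / b) (q - 1), pow_mul, hγb, one_pow]
    · rw [← hj'2]
      conv_rhs => rw [← pow_mul, ← pow_add]
      congr 1
      exact (Nat.mod_add_div j' b).symm
  -- γ generates a degree-b extension of F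
  have hγK0 : ((γ : K)) ≠ 0 := Units.ne_zero γ
  have hint : IsIntegral F ((γ : K)) := IsIntegral.of_finite F _
  have hdeg : (minpoly F ((γ : K))).natDegree = b := by
    obtain ⟨hcdvd, hpow⟩ := minpoly_natDegree_dvd_and_pow_eq_one F ((γ : K)) hγK0
    rw [hfinrank] at hcdvd
    rw [Nat.card_eq_fintype_card, hcardF] at hpow
    set c0 := (minpoly F ((γ : K))).natDegree with hc0
    have hc0pos : 0 < c0 := minpoly.natDegree_pos hint
    by_contra hne
    have hlt : c0 < b := lt_of_le_of_ne (Nat.le_of_dvd hbpos hcdvd) hne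
    have hγpow : γ ^ (q ^ c0 - 1) = 1 := Units.ext (by simpa using hpow)
    have hkdvd2 : k ∣ q ^ c0 - 1 := horderγ ▸ orderOf_dvd_of_pow_eq_one hγpow
    refine hk.2 (m * c0) ?_ ?_ ?_
    · exact Nat.one_le_iff_ne_zero.mpr (Nat.mul_ne_zero hmpos.ne' hc0pos.ne')
    · rw [hnmb]
      exact (Nat.mul_lt_mul_left hmpos).mpr hlt
    · rwa [pow_mul, ← hq]
  -- the basis 1, γ, ..., γ^(b-1)
  have hli : LinearIndependent F (fun i : Fin b => ((γ : K)) ^ (i : ℕ)) := by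
    have h := (linearIndependent_pow (K := F) ((γ : K))).comp
      (finCongr hdeg.symm) (finCongr hdeg.symm).injective
    simpa [Function.comp_def] using h
  haveI : Nonempty (Fin b) := ⟨⟨0, hbpos⟩⟩
  set B := basisOfLinearIndependentOfCardEqFinrank hli
    (by rw [Fintype.card_fin, hfinrank]) with hB
  have hBi : ∀ i : Fin b, B i = ((γ : K)) ^ (i : ℕ) := fun i => by
    rw [hB, coe_basisOfLinearIndependentOfCardEqFinrank]
  have hsmul : ∀ (c : F) (x : K), c • x = (c : K) * x := fun c x => rfl
  -- characterisation of d-th powers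
  have key1 : ∀ z : K, (∃ w : K, w ≠ 0 ∧ w ^ d = z) ↔
      ∃ (i : Fin b) (c : Kˣ), (c : K) ∈ F ∧ z = ((γ : K)) ^ (i : ℕ) * (c : K) := by
    intro z
    constructor
    · rintro ⟨w, hw0, rfl⟩
      have hx : (Units.mk0 w hw0 ^ d) ^ k = 1 := by
        rw [← pow_mul, hdk, ← hcardU, pow_card_eq_one]
      obtain ⟨i, c, hc, hxe⟩ := hC _ hx
      refine ⟨i, c, hc, ?_⟩
      have h := congrArg Units.val hxe
      simpa using h
    · rintro ⟨i, c, hc, rfl⟩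
      have h1 : (γ ^ (i : ℕ) * c) ^ k = 1 := hC' _ _ hc
      obtain ⟨z, hz⟩ := (exists_pow_eq_iff hkpos.ne'
        (by rw [hcardK]; exact hdk) _).mpr h1
      refine ⟨(z : K), Units.ne_zero z, ?_⟩
      have h := congrArg Units.val hz
      simpa using h
  -- characterisation via coordinates
  have key2 : ∀ z : K, (∃ (i : Fin b) (c : Kˣ), (c : K) ∈ F ∧ z = ((γ : K)) ^ (i : ℕ) * (c : K)) ↔
      ∃ i : Fin b, B.equivFun z i ≠ 0 ∧ ∀ j, j ≠ i → B.equivFun z j = 0 := by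
    intro z
    constructor
    · rintro ⟨i, c, hc, rfl⟩
      have hzz : ((γ : K)) ^ (i : ℕ) * (c : K) = (⟨(c : K), hc⟩ : F) • B i := by
        rw [hBi, hsmul]
        ring
      rw [hzz, map_smul]
      refine ⟨i, ?_, ?_⟩
      · simp only [Pi.smul_apply, Module.Basis.equivFun_self, if_pos rfl, smul_eq_mul, mul_one]
        exact fun h => Units.ne_zero c (by simpa [Subtype.ext_iff] using h)
      · intro j hj
        simp only [Pi.smul_apply, Module.Basis.equivFun_self, smul_eq_mul]
        rw [if_neg (fun h => hj (by rw [h])), mul_zero]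
    · rintro ⟨i, hi0, hij⟩
      have hzz : z = B.equivFun z i • B i := by
        conv_lhs => rw [← B.equivFun.symm_apply_apply z]
        rw [Module.Basis.equivFun_symm_apply]
        rw [Finset.sum_eq_single i (fun j _ hji => by rw [hij j hji, zero_smul])
          (fun h => absurd (Finset.mem_univ i) h)]
      have hc0 : ((B.equivFun z i : K)) ≠ 0 := fun h => hi0 (Subtype.ext (by simpa using h))
      refine ⟨i, Units.mk0 _ hc0, (B.equivFun z i).2, ?_⟩
      rw [Units.val_mk0]
      calc z = B.equivFun z i • B i := hzz
        _ = ((γ : K)) ^ (i : ℕ) * ((B.equivFun z i : K)) := by rw [hBi, hsmul]; ring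
  -- the S-set is closed under negation
  have hnegS : ∀ z : K, (∃ w : K, w ≠ 0 ∧ w ^ d = z) → (∃ w : K, w ≠ 0 ∧ w ^ d = -z) := by
    intro z hz
    obtain ⟨i, c, hc, rfl⟩ := (key1 z).mp hz
    refine (key1 _).mpr ⟨i, -c, ?_, ?_⟩
    · rw [Units.val_neg]
      exact neg_mem hc
    · rw [Units.val_neg, ← neg_mul_eq_mul_neg]
  have hSne : ∀ z : K, (∃ w : K, w ≠ 0 ∧ w ^ d = z) → z ≠ 0 := by
    intro z hz
    obtain ⟨i, c, hc, rfl⟩ := (key1 z).mp hz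
    exact mul_ne_zero (pow_ne_zero _ (Units.ne_zero γ)) (Units.ne_zero c)
  -- assemble the isomorphism
  have hcardF' : Fintype.card F = p ^ (n / b) := hcardF
  let eF : F ≃ Fin (p ^ (n / b)) := Fintype.equivFinOfCardEq hcardF'
  let φ : K ≃ (Fin b → Fin (p ^ (n / b))) :=
    B.equivFun.toEquiv.trans (Equiv.piCongrRight fun _ => eF)
  have hφ : ∀ (x : K) (i : Fin b), φ x i = eF (B.equivFun x i) := fun x i => by
    simp [φ, Equiv.piCongrRight, Equiv.trans_apply]
  have hdexp : (p ^ n - 1) / (b * (p ^ (n / b) - 1)) = d := rfl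
  refine ⟨⟨φ, ?_⟩⟩
  intro x y
  show (boxPow b ⊤).Adj (φ x) (φ y) ↔ (gpaley p n k).Adj x y
  have hgp : (gpaley p n k).Adj x y ↔ x ≠ y ∧
      ((∃ w : K, w ≠ 0 ∧ w ^ d = x - y) ∨ (∃ w : K, w ≠ 0 ∧ w ^ d = y - x)) := by
    rw [gpaley, SimpleGraph.fromRel_adj]
  have hbox : (boxPow b ⊤).Adj (φ x) (φ y) ↔
      ∃ i : Fin b, B.equivFun (x - y) i ≠ 0 ∧ ∀ j, j ≠ i → B.equivFun (x - y) j = 0 := by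
    show (∃ i, (⊤ : SimpleGraph (Fin (p ^ (n / b)))).Adj (φ x i) (φ y i) ∧
        ∀ j, j ≠ i → φ x j = φ y j) ↔ _
    have hcoord : ∀ i : Fin b, B.equivFun (x - y) i = B.equivFun x i - B.equivFun y i := by
      intro i
      rw [map_sub]
      rfl
    constructor
    · rintro ⟨i, hadj, hforall⟩
      refine ⟨i, ?_, ?_⟩
      · rw [hcoord i, sub_ne_zero]
        intro h
        exact (SimpleGraph.top_adj _ _).mp hadj (by rw [hφ, hφ, h])
      · intro j hj
        rw [hcoord j, sub_eq_zero]
        have := hforall j hj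
        rw [hφ, hφ] at this
        exact eF.injective this
    · rintro ⟨i, hi0, hij⟩
      refine ⟨i, ?_, ?_⟩
      · rw [SimpleGraph.top_adj, hφ, hφ]
        intro h
        exact hi0 (by rw [hcoord i, eF.injective h, sub_self])
      · intro j hj
        rw [hφ, hφ]
        congr 1
        have := hij j hj
        rw [hcoord j, sub_eq_zero] at this
        exact this
  rw [hbox, hgp, ← key2, ← key1]
  constructor
  · intro h
    exact ⟨fun he => hSne _ h (by rw [he, sub_self]), Or.inl h⟩
  · rintro ⟨hne, h | h⟩
    · exact h
    · have := hnegS _ h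
      rwa [neg_sub] at this
end
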